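/- arXiv:0901.1918 — 7 statements merged into one kernel-verified Lean document; each statement's English description precedes it below -/
import Mathlib

section
/- Let q ∈ (−1,0). Then for every integer k ≥ 0 the even moments of μ_q are given by ∫ x^{2k} dμ_q(x) = (q+1)/(q−1) · 1/(k+1) · ∑_{r=−k−1}^{k+1} (−1)^r · C(2k+2, k+1+r) · r/(1+q^r), and all odd moments vanish: ∫ x^{2k+1} dμ_q(x) = 0 for every integer k ≥ 0. (Here C(m,j) denotes the binomial coefficient, equal to 0 when j < 0 or j > m; the r = 0 term of the sum is 0; all denominators 1+q^r are nonzero since |q^r| ≠ 1 for r ≠ 0.) -/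
open MeasureTheory

open Real Finset
open scoped NNReal ENNReal

/-- `c q r` for `r ≥ 1`: the Fourier coefficient `q^(r-1)(1+q)^2/((1+q^(r+1))(1+q^(r-1)))`. -/
noncomputable def circCoeff (q : ℝ) (r : ℕ) : ℝ :=
  q ^ (r - 1) * (1 + q) ^ 2 / ((1 + q ^ (r + 1)) * (1 + q ^ (r - 1)))

/-- The circular density `F_q(t) = 1 + 2 ∑_{r≥1} (-1)^r c_r(q) cos(2rt)`. -/
noncomputable def circDensity (q : ℝ) (t : ℝ) : ℝ :=
  1 + 2 * ∑' r : ℕ, (-1 : ℝ) ^ (r + 1) * circCoeff q (r + 1) * Real.cos (2 * (r + 1) * t)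

/-- The measure `μ_q`: pushforward under `t ↦ 2 cos t` of the measure on `[0, 2π]`
with density `F_q(t)/(2π)`. -/
noncomputable def muQ (q : ℝ) : Measure ℝ :=
  Measure.map (fun t => 2 * Real.cos t)
    ((volume.restrict (Set.Icc 0 (2 * Real.pi))).withDensity
      (fun t => ENNReal.ofReal (circDensity q t / (2 * Real.pi))))

section basic
variable {q : ℝ} (hq : q ∈ Set.Ioo (-1 : ℝ) 0)
include hq

lemma habs : |q| < 1 := abs_lt.2 ⟨hq.1, hq.2.trans one_pos⟩

lemma h1q : 0 < 1 + q := by have := hq.1; linarith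

lemma pow_gt (s : ℕ) : q ≤ q ^ s := by
  cases s with
  | zero => simpa using (hq.2.trans one_pos).le
  | succ n =>
    have h1 : |q ^ (n+1)| ≤ |q| := by
      rw [abs_pow]
      calc |q| ^ (n+1) ≤ |q| ^ 1 :=
        pow_le_pow_of_le_one (abs_nonneg q) (habs hq).le (by omega)
      _ = |q| := pow_one _
    have := neg_abs_le (q ^ (n+1))
    have : -|q| ≤ q ^ (n+1) := by linarith
    have hqa : -|q| = q := by rw [abs_of_neg hq.2]; ring
    linarith [hqa ▸ this]

lemma denom_pos (s : ℕ) : 0 < 1 + q ^ s := by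
  have := pow_gt hq s; have := h1q hq; linarith

lemma denom_ge (s : ℕ) : 1 + q ≤ 1 + q ^ s := by
  have := pow_gt hq s; linarith

lemma c_bound (r : ℕ) : |circCoeff q (r + 1)| ≤ |q| ^ r := by
  have hD : (1+q)^2 ≤ (1 + q ^ (r+1+1)) * (1 + q ^ r) := by
    have h1 := denom_ge hq (r+1+1)
    have h2 := denom_ge hq r
    have h0 := h1q hq
    nlinarith [denom_pos hq (r+1+1), denom_pos hq r]
  have hDpos : 0 < (1 + q ^ (r+1+1)) * (1 + q ^ r) :=
    mul_pos (denom_pos hq _) (denom_pos hq _)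
  have hsimp : (r + 1 : ℕ) - 1 = r := rfl
  rw [circCoeff, hsimp, abs_div, abs_mul, abs_pow, abs_pow]
  rw [abs_of_pos hDpos]
  rw [div_le_iff₀ hDpos]
  have h2 : |1 + q| ^ 2 = (1+q)^2 := by rw [abs_of_pos (h1q hq)]
  rw [h2]
  calc |q| ^ r * (1+q)^2 ≤ |q| ^ r * ((1 + q ^ (r+1+1)) * (1 + q ^ r)) := by
        apply mul_le_mul_of_nonneg_left hD (by positivity)
    _ = |q| ^ r * ((1 + q ^ (r+1+1)) * (1 + q ^ r)) := rfl

/-- `f s = 1/(1+q^s)` -/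
noncomputable def fq (q : ℝ) (s : ℕ) : ℝ := 1 / (1 + q ^ s)

lemma c_eq (r : ℕ) :
    circCoeff q (r + 1) = (1 + q) / (q - 1) * (fq q r - fq q (r + 2)) := by
  have h0 := (denom_pos hq r).ne'
  have h2 := (denom_pos hq (r+2)).ne'
  have hq1 : q - 1 ≠ 0 := by have := hq.2; intro h; nlinarith
  have hsimp : (r + 1 : ℕ) - 1 = r := rfl
  rw [circCoeff, hsimp, fq, fq]
  have : (r + 1 + 1 : ℕ) = r + 2 := rfl
  rw [this]
  field_simp
  ring

end basic

section sums
variable {q : ℝ} (hq : q ∈ Set.Ioo (-1 : ℝ) 0)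

/-- the coefficient `b_r = (-1)^(r+1) c_{r+1}` -/
noncomputable def bq (q : ℝ) (r : ℕ) : ℝ := (-1 : ℝ) ^ (r + 1) * circCoeff q (r + 1)

include hq

lemma b_bound (r : ℕ) : |bq q r| ≤ |q| ^ r := by
  rw [bq, abs_mul, abs_pow, abs_neg, abs_one, one_pow, one_mul]
  exact c_bound hq r

lemma summable_geo : Summable (fun r : ℕ => |q| ^ r) :=
  summable_geometric_of_lt_one (abs_nonneg q) (habs hq)

lemma summable_b : Summable (bq q) :=
  Summable.of_norm_bounded (summable_geo hq) (fun r => by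
    rw [Real.norm_eq_abs]; exact b_bound hq r)

/-- telescoping helper -/
noncomputable def Gq (q : ℝ) (r : ℕ) : ℝ :=
  (1 + q) / (q - 1) * ((-1 : ℝ) ^ r * (fq q r - fq q (r + 1)))

lemma b_telescope (r : ℕ) : bq q r = Gq q (r + 1) - Gq q r := by
  rw [bq, c_eq hq, Gq, Gq]
  have h2 : (r + 1 + 1 : ℕ) = r + 2 := rfl
  rw [h2, pow_succ]
  ring

lemma G_zero : Gq q 0 = 1 / 2 := by
  have h0 : (1 : ℝ) + q ^ (0:ℕ) = 2 := by norm_num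
  have h1 := (denom_pos hq 1).ne'
  have hq1 : q - 1 ≠ 0 := by have := hq.2; intro h; nlinarith
  have h1' : (1 : ℝ) + q ≠ 0 := (h1q hq).ne'
  rw [Gq, fq, fq]
  simp only [pow_zero, pow_one, one_mul]
  field_simp
  ring

lemma G_tendsto : Filter.Tendsto (Gq q) Filter.atTop (nhds 0) := by
  have hpow : Filter.Tendsto (fun n : ℕ => q ^ n) Filter.atTop (nhds 0) :=
    tendsto_pow_atTop_nhds_zero_of_abs_lt_one (habs hq)
  have hf : Filter.Tendsto (fun n : ℕ => fq q n) Filter.atTop (nhds 1) := by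
    have : Filter.Tendsto (fun n : ℕ => 1 + q ^ n) Filter.atTop (nhds 1) := by
      simpa using (tendsto_const_nhds.add hpow)
    have h2 := this.inv₀ one_ne_zero
    simpa [fq, one_div] using h2
  have hf1 : Filter.Tendsto (fun n : ℕ => fq q (n + 1)) Filter.atTop (nhds 1) :=
    hf.comp (Filter.tendsto_add_atTop_nat 1)
  have hdiff : Filter.Tendsto (fun n : ℕ => fq q n - fq q (n + 1)) Filter.atTop (nhds 0) := by
    simpa using hf.sub hf1
  apply squeeze_zero_norm (a := fun n => |(1 + q) / (q - 1)| * |fq q n - fq q (n + 1)|)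
  · intro n
    rw [Gq, Real.norm_eq_abs, abs_mul, abs_mul, abs_pow, abs_neg, abs_one, one_pow, one_mul]
  · have := (hdiff.abs).const_mul (|(1 + q) / (q - 1)|)
    simpa using this

lemma hasSum_b : HasSum (bq q) (-(1 / 2)) := by
  rw [(summable_b hq).hasSum_iff_tendsto_nat]
  have key : ∀ n, ∑ i ∈ Finset.range n, bq q i = Gq q n - Gq q 0 := by
    intro n
    calc ∑ i ∈ Finset.range n, bq q i = ∑ i ∈ Finset.range n, (Gq q (i+1) - Gq q i) :=
          Finset.sum_congr rfl (fun i _ => b_telescope hq i)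
      _ = Gq q n - Gq q 0 := Finset.sum_range_sub _ _
  simp only [key]
  have := (G_tendsto hq).sub (tendsto_const_nhds (x := Gq q 0))
  simpa [G_zero hq] using this

lemma b_nonpos (r : ℕ) : bq q r ≤ 0 := by
  have hD : 0 < (1 + q ^ (r + 1 + 1)) * (1 + q ^ (r + 1 - 1)) :=
    mul_pos (denom_pos hq _) (denom_pos hq _)
  rw [bq, circCoeff]
  have hsimp : (r + 1 : ℕ) - 1 = r := rfl
  rw [hsimp] at hD ⊢
  rcases Nat.even_or_odd r with he | ho
  · have h1 : ((-1 : ℝ)) ^ (r + 1) = -1 := (he.add_one).neg_one_pow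
    have h2 : 0 ≤ q ^ r := he.pow_nonneg q
    rw [h1]
    have : 0 ≤ q ^ r * (1 + q) ^ 2 / ((1 + q ^ (r + 1 + 1)) * (1 + q ^ r)) :=
      div_nonneg (mul_nonneg h2 (sq_nonneg _)) hD.le
    linarith
  · have h1 : ((-1 : ℝ)) ^ (r + 1) = 1 := (Odd.add_one ho).neg_one_pow
    have h2 : q ^ r ≤ 0 := ho.pow_nonpos hq.2.le
    rw [h1, one_mul]
    exact div_nonpos_of_nonpos_of_nonneg (mul_nonpos_of_nonpos_of_nonneg h2 (sq_nonneg _)) hD.le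

lemma summable_bcos (t : ℝ) :
    Summable (fun r : ℕ => bq q r * Real.cos (2 * (r + 1) * t)) := by
  apply Summable.of_norm_bounded (summable_geo hq)
  intro r
  rw [Real.norm_eq_abs, abs_mul]
  calc |bq q r| * |Real.cos (2 * (r + 1) * t)| ≤ |q| ^ r * 1 := by
        apply mul_le_mul (b_bound hq r) (Real.abs_cos_le_one _) (abs_nonneg _) (by positivity)
    _ = |q| ^ r := mul_one _

omit hq in
lemma circDensity_eq (t : ℝ) :
    circDensity q t = 1 + 2 * ∑' r : ℕ, bq q r * Real.cos (2 * (r + 1) * t) := rfl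

lemma circDensity_nonneg (t : ℝ) : 0 ≤ circDensity q t := by
  rw [circDensity_eq]
  have h1 : ∑' r : ℕ, bq q r = -(1/2) := (hasSum_b hq).tsum_eq
  have h2 : ∑' r : ℕ, bq q r * Real.cos (2 * (r + 1) * t)
      - ∑' r : ℕ, bq q r
      = ∑' r : ℕ, (bq q r * Real.cos (2 * (r + 1) * t) - bq q r) :=
    (Summable.tsum_sub (summable_bcos hq t) (summable_b hq)).symm
  have h3 : 0 ≤ ∑' r : ℕ, (bq q r * Real.cos (2 * (r + 1) * t) - bq q r) := by
    apply tsum_nonneg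
    intro r
    have hc : Real.cos (2 * (r + 1) * t) - 1 ≤ 0 := by
      have := Real.cos_le_one (2 * (r + 1) * t); linarith
    have := mul_nonneg_of_nonpos_of_nonpos (b_nonpos hq r) hc
    linarith [this]
  have := h2 ▸ h3
  linarith [h1 ▸ this]

lemma circDensity_continuous : Continuous (circDensity q) := by
  apply Continuous.add continuous_const
  apply Continuous.mul continuous_const
  apply continuous_tsum (u := fun r : ℕ => |q| ^ r)
  · intro r
    fun_prop
  · exact summable_geo hq
  · intro r t
    rw [Real.norm_eq_abs, abs_mul]
    calc |(-1 : ℝ) ^ (r+1) * circCoeff q (r+1)| * |Real.cos (2 * (r + 1) * t)|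
        ≤ |(-1 : ℝ) ^ (r+1) * circCoeff q (r+1)| * 1 :=
          mul_le_mul_of_nonneg_left (Real.abs_cos_le_one _) (abs_nonneg _)
      _ = |bq q r| := by rw [mul_one]; rfl
      _ ≤ |q| ^ r := b_bound hq r

end sums

section trig
open intervalIntegral

lemma cos_int_integral (c : ℤ) :
    ∫ t in (0:ℝ)..(2*π), Real.cos (c * t) = if c = 0 then 2*π else 0 := by
  by_cases hc : c = 0
  · simp [hc]
  · rw [if_neg hc]
    have hc' : (c : ℝ) ≠ 0 := Int.cast_ne_zero.2 hc
    have hderiv : ∀ x ∈ Set.uIcc (0:ℝ) (2*π),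
        HasDerivAt (fun t => Real.sin (c * t) / c) (Real.cos (c * x)) x := by
      intro x _
      have h1 : HasDerivAt (fun t : ℝ => (c : ℝ) * t) c x := by
        simpa using (hasDerivAt_id x).const_mul (c : ℝ)
      have h2 : HasDerivAt (fun t : ℝ => Real.sin (c * t)) (Real.cos (c * x) * c) x :=
        (Real.hasDerivAt_sin ((c : ℝ) * x)).comp x h1
      have h3 := h2.div_const (c : ℝ)
      simpa [mul_div_assoc, mul_div_cancel_right₀ _ hc'] using h3
    rw [integral_eq_sub_of_hasDerivAt hderiv ((by fun_prop : Continuous fun t : ℝ =>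
      Real.cos (c * t)).intervalIntegrable 0 (2*π))]
    have h0 : Real.sin ((c : ℝ) * (2 * π)) = 0 := by
      have : ((c : ℝ)) * (2 * π) = ((2 * c : ℤ) : ℝ) * π := by push_cast; ring
      rw [this, Real.sin_int_mul_pi]
    simp [h0]

lemma cos_mul_cos (a b t : ℝ) :
    Real.cos (a * t) * Real.cos (b * t) =
      (Real.cos ((a - b) * t) + Real.cos ((a + b) * t)) / 2 := by
  rw [sub_mul, add_mul, Real.cos_add, Real.cos_sub]
  ring

lemma orth (a b : ℤ) :
    ∫ t in (0:ℝ)..(2*π), Real.cos (a * t) * Real.cos (b * t)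
      = π * ((if a = b then 1 else 0) + (if a = -b then 1 else 0)) := by
  have key : (fun t : ℝ => Real.cos (a * t) * Real.cos (b * t))
      = fun t : ℝ => (Real.cos (((a - b : ℤ) : ℝ) * t) + Real.cos (((a + b : ℤ) : ℝ) * t)) / 2 := by
    funext t
    push_cast
    exact cos_mul_cos a b t
  rw [key]
  rw [intervalIntegral.integral_div]
  rw [intervalIntegral.integral_add ((by fun_prop : Continuous fun t : ℝ =>
      Real.cos (((a - b : ℤ) : ℝ) * t)).intervalIntegrable 0 (2*π))
    ((by fun_prop : Continuous fun t : ℝ =>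
      Real.cos (((a + b : ℤ) : ℝ) * t)).intervalIntegrable 0 (2*π))]
  rw [cos_int_integral, cos_int_integral]
  rw [if_congr (sub_eq_zero (a := a) (b := b)) rfl rfl,
    if_congr (show a + b = 0 ↔ a = -b by omega) rfl rfl]
  by_cases h1 : a = b <;> by_cases h2 : a = -b <;> simp [h1, h2] <;> split_ifs <;>
    first | ring | (exfalso; omega)

lemma ptosum (x t : ℝ) :
    2 * Real.cos t * Real.cos (x * t) = Real.cos ((x + 1) * t) + Real.cos ((x - 1) * t) := by
  rw [add_mul, sub_mul, one_mul, Real.cos_add, Real.cos_sub]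
  ring

lemma two_cos_pow (n : ℕ) (t : ℝ) :
    (2 * Real.cos t) ^ n
      = ∑ j ∈ Finset.range (n+1), (n.choose j : ℝ) * Real.cos (((n : ℝ) - 2*j) * t) := by
  induction n with
  | zero => simp
  | succ n ih =>
    have step : (2 * Real.cos t) ^ (n+1) = (2 * Real.cos t) * (2 * Real.cos t) ^ n := by ring
    rw [step, ih, Finset.mul_sum]
    have hterm : ∀ j : ℕ,
        (2 * Real.cos t) * ((n.choose j : ℝ) * Real.cos (((n : ℝ) - 2*j) * t))
          = (n.choose j : ℝ) * Real.cos (((n : ℝ) + 1 - 2*j) * t)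
            + (n.choose j : ℝ) * Real.cos (((n : ℝ) - 1 - 2*j) * t) := by
      intro j
      have := ptosum ((n : ℝ) - 2*j) t
      have harg1 : ((n : ℝ) - 2*j) + 1 = (n : ℝ) + 1 - 2*j := by ring
      have harg2 : ((n : ℝ) - 2*j) - 1 = (n : ℝ) - 1 - 2*j := by ring
      rw [harg1, harg2] at this
      nlinarith [this]
    rw [Finset.sum_congr rfl (fun j _ => hterm j)]
    rw [Finset.sum_add_distrib]
    have pascal : ∀ j : ℕ, (((n+1).choose (j+1) : ℝ)) = (n.choose j : ℝ) + (n.choose (j+1) : ℝ) := by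
      intro j
      rw [Nat.choose_succ_succ]
      push_cast
      ring
    have hR : ∑ j ∈ Finset.range (n+1+1), (((n+1).choose j : ℝ)) * Real.cos ((((n+1:ℕ) : ℝ) - 2*j) * t)
        = ∑ j ∈ Finset.range (n+1), (n.choose j : ℝ) * Real.cos (((n : ℝ) - 1 - 2*j) * t)
          + ∑ j ∈ Finset.range (n+1), (n.choose (j+1) : ℝ) * Real.cos (((n : ℝ) - 1 - 2*j) * t)
          + Real.cos (((n : ℝ) + 1) * t) := by
      rw [Finset.sum_range_succ']
      have h0 : (((n+1).choose 0 : ℝ)) * Real.cos ((((n+1:ℕ) : ℝ) - 2*(0:ℕ)) * t)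
          = Real.cos (((n : ℝ) + 1) * t) := by
        simp only [Nat.choose_zero_right, Nat.cast_one, one_mul, Nat.cast_zero]
        congr 1
        push_cast
        ring
      rw [h0]
      congr 1
      rw [← Finset.sum_add_distrib]
      apply Finset.sum_congr rfl
      intro j _
      rw [pascal]
      have harg : (((n+1:ℕ) : ℝ) - 2*((j:ℝ)+1)) = (n : ℝ) - 1 - 2*j := by push_cast; ring
      have : Real.cos ((((n+1:ℕ) : ℝ) - 2*((j+1:ℕ):ℝ)) * t) = Real.cos (((n : ℝ) - 1 - 2*j) * t) := by
        congr 1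
        push_cast
        ring
      rw [this]
      ring
    have hS1 : ∑ j ∈ Finset.range (n+1), (n.choose j : ℝ) * Real.cos (((n : ℝ) + 1 - 2*j) * t)
        = ∑ j ∈ Finset.range n, (n.choose (j+1) : ℝ) * Real.cos (((n : ℝ) - 1 - 2*j) * t)
          + Real.cos (((n : ℝ) + 1) * t) := by
      rw [Finset.sum_range_succ']
      congr 1
      · apply Finset.sum_congr rfl
        intro j _
        have : Real.cos (((n : ℝ) + 1 - 2*((j+1:ℕ):ℝ)) * t) = Real.cos (((n : ℝ) - 1 - 2*j) * t) := by
          congr 1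
          push_cast
          ring
        rw [this]
      · simp
    have hS3 : ∑ j ∈ Finset.range (n+1), (n.choose (j+1) : ℝ) * Real.cos (((n : ℝ) - 1 - 2*j) * t)
        = ∑ j ∈ Finset.range n, (n.choose (j+1) : ℝ) * Real.cos (((n : ℝ) - 1 - 2*j) * t) := by
      rw [Finset.sum_range_succ]
      simp
    rw [hR, hS1, hS3]
    ring

end trig

section Jsec
open intervalIntegral

lemma Jint (n l : ℕ) :
    ∫ t in (0:ℝ)..(2*π), (2 * Real.cos t) ^ n * Real.cos (2 * l * t)
      = if 2*l ≤ n ∧ n % 2 = 0 then 2*π*(n.choose (n/2 + l)) else 0 := by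
  have key : (fun t : ℝ => (2 * Real.cos t) ^ n * Real.cos (2 * l * t))
      = fun t : ℝ => ∑ j ∈ Finset.range (n+1),
          (n.choose j : ℝ) * (Real.cos ((((n : ℤ) - 2*j : ℤ) : ℝ) * t)
            * Real.cos ((((2*l : ℕ) : ℤ) : ℝ) * t)) := by
    funext t
    rw [two_cos_pow, Finset.sum_mul]
    apply Finset.sum_congr rfl
    intro j _
    have h1 : (((n : ℤ) - 2*j : ℤ) : ℝ) = (n : ℝ) - 2*j := by push_cast; ring
    have h2 : ((((2*l : ℕ) : ℤ)) : ℝ) * t = 2 * l * t := by push_cast; ring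
    rw [h1, h2]
    ring
  rw [key]
  rw [intervalIntegral.integral_finset_sum (fun j _ => by
    apply Continuous.intervalIntegrable
    fun_prop)]
  have horth : ∀ j ∈ Finset.range (n+1),
      (∫ t in (0:ℝ)..(2*π), (n.choose j : ℝ) * (Real.cos ((((n : ℤ) - 2*j : ℤ) : ℝ) * t)
          * Real.cos ((((2*l : ℕ) : ℤ) : ℝ) * t)))
      = (n.choose j : ℝ) * (π * ((if ((n : ℤ) - 2*j = (2*l : ℕ)) then 1 else 0)
          + (if ((n : ℤ) - 2*j = -((2*l : ℕ) : ℤ)) then 1 else 0))) := by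
    intro j _
    rw [intervalIntegral.integral_const_mul]
    rw [orth ((n : ℤ) - 2*j) ((2*l : ℕ) : ℤ)]
  rw [Finset.sum_congr rfl horth]
  by_cases H : 2*l ≤ n ∧ n % 2 = 0
  · rw [if_pos H]
    have hcongr : ∀ j ∈ Finset.range (n+1),
        (n.choose j : ℝ) * (π * ((if ((n : ℤ) - 2*j = (2*l : ℕ)) then 1 else 0)
            + (if ((n : ℤ) - 2*j = -((2*l : ℕ) : ℤ)) then 1 else 0)))
        = ((if j = n/2 - l then (n.choose j : ℝ) * π else 0)
            + (if j = n/2 + l then (n.choose j : ℝ) * π else 0)) := by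
      intro j hj
      rw [Finset.mem_range] at hj
      rw [if_congr (show ((n : ℤ) - 2*j = (2*l : ℕ)) ↔ j = n/2 - l by omega) rfl rfl,
        if_congr (show ((n : ℤ) - 2*j = -((2*l : ℕ) : ℤ)) ↔ j = n/2 + l by omega) rfl rfl]
      by_cases c1 : j = n/2 - l <;> by_cases c2 : j = n/2 + l <;> simp [c1, c2] <;> split_ifs <;> ring
    rw [Finset.sum_congr rfl hcongr, Finset.sum_add_distrib, Finset.sum_ite_eq',
      Finset.sum_ite_eq']
    rw [if_pos (Finset.mem_range.2 (by omega)), if_pos (Finset.mem_range.2 (by omega))]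
    have hsymm : n.choose (n/2 - l) = n.choose (n/2 + l) := by
      have h1 : n - (n/2 + l) = n/2 - l := by omega
      rw [← h1, Nat.choose_symm (by omega)]
    rw [hsymm]
    ring
  · rw [if_neg H]
    have hz : ∀ j ∈ Finset.range (n+1),
        (n.choose j : ℝ) * (π * ((if ((n : ℤ) - 2*j = (2*l : ℕ)) then 1 else 0)
            + (if ((n : ℤ) - 2*j = -((2*l : ℕ) : ℤ)) then 1 else 0))) = 0 := by
      intro j hj
      rw [Finset.mem_range] at hj
      rw [if_neg (by omega), if_neg (by omega)]
      ring
    rw [Finset.sum_congr rfl hz, Finset.sum_const_zero]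

end Jsec

section momentsec
variable {q : ℝ} (hq : q ∈ Set.Ioo (-1 : ℝ) 0)
include hq

lemma tsum_cont (n : ℕ) :
    Continuous (fun t : ℝ => ∑' r : ℕ, bq q r * ((2 * Real.cos t) ^ n * Real.cos (2 * (r+1) * t))) := by
  apply continuous_tsum (u := fun r : ℕ => |q| ^ r * 2 ^ n)
  · intro r; fun_prop
  · exact (summable_geo hq).mul_right _
  · intro r t
    rw [Real.norm_eq_abs, abs_mul, abs_mul]
    have h1 : |bq q r| ≤ |q| ^ r := b_bound hq r
    have h2 : |(2 * Real.cos t) ^ n| ≤ 2 ^ n := by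
      rw [abs_pow]
      apply pow_le_pow_left₀ (abs_nonneg _)
      rw [abs_mul]
      calc |2| * |Real.cos t| ≤ 2 * 1 := by
            apply mul_le_mul (by norm_num) (Real.abs_cos_le_one t) (abs_nonneg _) (by norm_num)
        _ = 2 := mul_one 2
    have h3 : |Real.cos (2 * (r+1) * t)| ≤ 1 := Real.abs_cos_le_one _
    calc |bq q r| * (|(2 * Real.cos t) ^ n| * |Real.cos (2 * (r+1) * t)|)
        ≤ |q| ^ r * (2 ^ n * 1) := by
          apply mul_le_mul h1 _ (by positivity) (by positivity)
          apply mul_le_mul h2 h3 (abs_nonneg _) (by positivity)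
      _ = |q| ^ r * 2 ^ n := by ring

lemma moment_eq (n : ℕ) :
    ∫ x, x ^ n ∂(muQ q)
      = (if n % 2 = 0 then (n.choose (n/2) : ℝ) else 0)
        + 2 * ∑' r : ℕ, bq q r *
            (if 2*(r+1) ≤ n ∧ n % 2 = 0 then (n.choose (n/2 + (r+1)) : ℝ) else 0) := by
  have hπ : (0:ℝ) < π := Real.pi_pos
  -- step 1: unfold the map
  rw [muQ]
  rw [integral_map (by fun_prop : Continuous fun t : ℝ => 2 * Real.cos t).aemeasurable
    ((continuous_pow n).aestronglyMeasurable)]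
  -- step 2: withDensity
  have hmeas : Measurable (fun t : ℝ => Real.toNNReal (circDensity q t / (2 * π))) :=
    (circDensity_continuous hq).measurable.div_const _ |>.real_toNNReal
  rw [show (fun t : ℝ => ENNReal.ofReal (circDensity q t / (2 * π)))
      = (fun t : ℝ => ((Real.toNNReal (circDensity q t / (2 * π)) : ℝ≥0) : ℝ≥0∞)) from rfl]
  rw [integral_withDensity_eq_integral_smul hmeas]
  -- step 3: pointwise rewrite of the integrand
  have hpt : ∀ t : ℝ, Real.toNNReal (circDensity q t / (2 * π)) • (2 * Real.cos t) ^ n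
      = (1/(2*π)) * ((2 * Real.cos t) ^ n * Real.cos (2 * (0:ℕ) * t))
        + (1/π) * ∑' r : ℕ, bq q r * ((2 * Real.cos t) ^ n * Real.cos (2 * (r+1) * t)) := by
    intro t
    rw [NNReal.smul_def, Real.coe_toNNReal _
      (div_nonneg (circDensity_nonneg hq t) (by positivity))]
    rw [circDensity_eq]
    have hts : ∑' r : ℕ, bq q r * ((2 * Real.cos t) ^ n * Real.cos (2 * (r+1) * t))
        = (∑' r : ℕ, bq q r * Real.cos (2 * (r+1) * t)) * (2 * Real.cos t) ^ n := by
      rw [← tsum_mul_right]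
      exact tsum_congr fun r => by ring
    rw [hts]
    have hc0 : Real.cos (2 * ((0:ℕ):ℝ) * t) = 1 := by norm_num
    rw [hc0]
    simp only [smul_eq_mul, one_div]
    ring
  simp only [hpt]
  -- split the integral
  have hA : IntegrableOn (fun t : ℝ => (1/(2*π)) * ((2 * Real.cos t) ^ n
      * Real.cos (2 * ((0:ℕ):ℝ) * t))) (Set.Icc 0 (2*π)) volume :=
    (by fun_prop : Continuous fun t : ℝ => (1/(2*π)) * ((2 * Real.cos t) ^ n
      * Real.cos (2 * ((0:ℕ):ℝ) * t))).integrableOn_Icc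
  have hB : IntegrableOn (fun t : ℝ => (1/π) * ∑' r : ℕ, bq q r *
      ((2 * Real.cos t) ^ n * Real.cos (2 * (r+1) * t))) (Set.Icc 0 (2*π)) volume :=
    (continuous_const.mul (tsum_cont hq n)).integrableOn_Icc
  rw [integral_add hA hB]
  -- the constant part
  have hIcc : ∀ (g : ℝ → ℝ), ∫ t in Set.Icc 0 (2*π), g t = ∫ t in (0:ℝ)..(2*π), g t := by
    intro g
    rw [integral_Icc_eq_integral_Ioc, ← intervalIntegral.integral_of_le (by positivity)]
  have e1 : ∫ t in Set.Icc 0 (2*π), (1/(2*π)) * ((2 * Real.cos t) ^ n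
      * Real.cos (2 * ((0:ℕ):ℝ) * t)) = (if n % 2 = 0 then (n.choose (n/2) : ℝ) else 0) := by
    rw [integral_const_mul, hIcc, Jint n 0]
    rw [if_congr (show (2*0 ≤ n ∧ n % 2 = 0) ↔ (n % 2 = 0) by
      constructor
      · exact fun h => h.2
      · exact fun h => ⟨by omega, h⟩) rfl rfl]
    split_ifs
    · field_simp; rw [add_zero]
    · ring
  rw [e1]
  congr 1
  -- the series part
  rw [integral_const_mul]
  have hf : ∀ r : ℕ, AEStronglyMeasurable (fun t : ℝ => bq q r *
      ((2 * Real.cos t) ^ n * Real.cos (2 * (r+1) * t)))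
      (volume.restrict (Set.Icc 0 (2*π))) := by
    intro r
    exact (by fun_prop : Continuous fun t : ℝ => bq q r *
      ((2 * Real.cos t) ^ n * Real.cos (2 * (r+1) * t))).aestronglyMeasurable.restrict
  have hbound : ∀ r t, ‖bq q r * ((2 * Real.cos t) ^ n * Real.cos (2 * (r+1) * t))‖
      ≤ |q| ^ r * 2 ^ n := by
    intro r t
    rw [Real.norm_eq_abs, abs_mul, abs_mul]
    have h1 : |bq q r| ≤ |q| ^ r := b_bound hq r
    have h2 : |(2 * Real.cos t) ^ n| ≤ 2 ^ n := by
      rw [abs_pow]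
      apply pow_le_pow_left₀ (abs_nonneg _)
      rw [abs_mul]
      calc |2| * |Real.cos t| ≤ 2 * 1 := by
            apply mul_le_mul (by norm_num) (Real.abs_cos_le_one t) (abs_nonneg _) (by norm_num)
        _ = 2 := mul_one 2
    calc |bq q r| * (|(2 * Real.cos t) ^ n| * |Real.cos (2 * (r+1) * t)|)
        ≤ |q| ^ r * (2 ^ n * 1) := by
          apply mul_le_mul h1 _ (by positivity) (by positivity)
          apply mul_le_mul h2 (Real.abs_cos_le_one _) (abs_nonneg _) (by positivity)
      _ = |q| ^ r * 2 ^ n := by ring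
  have hf' : ∑' r : ℕ, ∫⁻ t, ‖bq q r * ((2 * Real.cos t) ^ n
      * Real.cos (2 * (r+1) * t))‖₊ ∂(volume.restrict (Set.Icc 0 (2*π))) ≠ ⊤ := by
    have hle : ∀ r : ℕ, ∫⁻ t, ‖bq q r * ((2 * Real.cos t) ^ n
        * Real.cos (2 * (r+1) * t))‖₊ ∂(volume.restrict (Set.Icc 0 (2*π)))
        ≤ ENNReal.ofReal (|q| ^ r * 2 ^ n * (2*π)) := by
      intro r
      calc ∫⁻ t, ‖bq q r * ((2 * Real.cos t) ^ n
            * Real.cos (2 * (r+1) * t))‖₊ ∂(volume.restrict (Set.Icc 0 (2*π)))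
          ≤ ∫⁻ _t, ENNReal.ofReal (|q| ^ r * 2 ^ n) ∂(volume.restrict (Set.Icc 0 (2*π))) := by
            apply lintegral_mono
            intro t
            exact le_trans (le_of_eq (ofReal_norm _).symm)
              (ENNReal.ofReal_le_ofReal (hbound r t))
        _ = ENNReal.ofReal (|q| ^ r * 2 ^ n) * volume (Set.Icc (0:ℝ) (2*π)) := by
            rw [lintegral_const, Measure.restrict_apply_univ]
        _ = ENNReal.ofReal ((|q| ^ r * 2 ^ n) * (2*π - 0)) := by
            rw [Real.volume_Icc, ← ENNReal.ofReal_mul (by positivity)]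
        _ ≤ ENNReal.ofReal (|q| ^ r * 2 ^ n * (2*π)) :=
            ENNReal.ofReal_le_ofReal (le_of_eq (by ring))
    have hsummable : Summable (fun r : ℕ => |q| ^ r * 2 ^ n * (2*π)) := by
      have := (summable_geo hq).mul_right ((2:ℝ) ^ n * (2*π))
      exact this.congr (fun r => by ring)
    apply ne_of_lt
    calc ∑' r : ℕ, ∫⁻ t, ‖bq q r * ((2 * Real.cos t) ^ n
          * Real.cos (2 * (r+1) * t))‖₊ ∂(volume.restrict (Set.Icc 0 (2*π)))
        ≤ ∑' r : ℕ, ENNReal.ofReal (|q| ^ r * 2 ^ n * (2*π)) := ENNReal.tsum_le_tsum hle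
      _ = ENNReal.ofReal (∑' r : ℕ, |q| ^ r * 2 ^ n * (2*π)) :=
          (ENNReal.ofReal_tsum_of_nonneg (fun r => by positivity) hsummable).symm
      _ < ⊤ := ENNReal.ofReal_lt_top
  rw [integral_tsum hf hf']
  -- evaluate each integral
  have heach : ∀ r : ℕ, ∫ t in Set.Icc 0 (2*π), bq q r *
      ((2 * Real.cos t) ^ n * Real.cos (2 * (r+1) * t))
      = bq q r * (if 2*(r+1) ≤ n ∧ n % 2 = 0 then 2*π*(n.choose (n/2 + (r+1)) : ℝ) else 0) := by
    intro r
    rw [integral_const_mul, hIcc]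
    congr 1
    have hcast : (fun t : ℝ => (2 * Real.cos t) ^ n * Real.cos (2 * ((r:ℝ)+1) * t))
        = fun t : ℝ => (2 * Real.cos t) ^ n * Real.cos (2 * (((r+1):ℕ):ℝ) * t) := by
      funext t
      norm_cast
    rw [hcast, Jint n (r+1)]
  rw [tsum_congr heach]
  rw [← tsum_mul_left, ← tsum_mul_left]
  apply tsum_congr
  intro r
  split_ifs
  · field_simp
  · ring


lemma moment_odd (k : ℕ) : ∫ x, x ^ (2*k+1) ∂(muQ q) = 0 := by
  rw [moment_eq hq (2*k+1)]
  have h2 : ¬((2*k+1) % 2 = 0) := by omega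
  rw [if_neg h2]
  have hz : ∀ r : ℕ, bq q r *
      (if 2*(r+1) ≤ 2*k+1 ∧ (2*k+1) % 2 = 0 then ((2*k+1).choose ((2*k+1)/2 + (r+1)) : ℝ) else 0)
      = 0 := by
    intro r
    rw [if_neg (by omega)]
    ring
  rw [tsum_congr hz]
  simp

lemma moment_even (k : ℕ) : ∫ x, x ^ (2*k) ∂(muQ q)
    = (((2*k).choose k : ℝ))
      + 2 * ∑ r ∈ Finset.range k, bq q r * (((2*k).choose (k + (r+1)) : ℝ)) := by
  rw [moment_eq hq (2*k)]
  have h2 : (2*k) % 2 = 0 := by omega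
  rw [if_pos h2]
  have h3 : (2*k)/2 = k := by omega
  rw [h3]
  congr 2
  rw [tsum_eq_sum (s := Finset.range k) (fun r hr => by
    rw [if_neg (by rw [Finset.mem_range] at hr; omega)]
    ring)]
  apply Finset.sum_congr rfl
  intro r hr
  rw [Finset.mem_range] at hr
  rw [if_pos ⟨by omega, h2⟩]

end momentsec

section algebra

lemma bino (k r : ℕ) (h : r ≤ k) :
    ((r:ℝ)+1) * ((2*k+2).choose (k+r+2) : ℝ)
      = ((k:ℝ)+1) * (((2*k).choose (k+r) : ℝ) - ((2*k).choose (k+r+2) : ℝ)) := by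
  have h1 := Nat.add_one_mul_choose_eq (2*k+1) (k+r+1)
  have h2 := Nat.choose_mul_succ_eq (2*k+1) (k+r+2)
  have p1 := Nat.choose_succ_succ (2*k) (k+r)
  have p2 := Nat.choose_succ_succ (2*k) (k+r+1)
  have e1 : (2*k+1).succ = 2*k+2 := rfl
  have e2 : (k+r+1).succ = k+r+2 := rfl
  have e3 : 2*k+1+1 = 2*k+2 := rfl
  have e4 : 2*k+1+1 - (k+r+2) = k - r := by omega
  rw [e3, show k+r+1+1 = k+r+2 from rfl] at h1
  rw [e3, e4] at h2
  have p1' : (2*k+1).choose (k+r+1) = (2*k).choose (k+r) + (2*k).choose (k+r+1) := by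
    have : (2*k).succ = 2*k+1 := rfl
    have : (k+r).succ = k+r+1 := rfl
    exact p1
  have p2' : (2*k+1).choose (k+r+2) = (2*k).choose (k+r+1) + (2*k).choose (k+r+2) := p2
  have hA : ((2*k+2 : ℕ):ℝ) * ((2*k+1).choose (k+r+1) : ℝ)
      = ((2*k+2).choose (k+r+2) : ℝ) * ((k+r+2 : ℕ) : ℝ) := by exact_mod_cast congrArg (Nat.cast (R := ℝ)) h1
  have hB : ((2*k+1).choose (k+r+2) : ℝ) * ((2*k+2 : ℕ):ℝ)
      = ((2*k+2).choose (k+r+2) : ℝ) * ((k - r : ℕ) : ℝ) := by exact_mod_cast congrArg (Nat.cast (R := ℝ)) h2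
  have hkr : ((k - r : ℕ) : ℝ) = (k:ℝ) - r := by
    rw [Nat.cast_sub h]
  rw [hkr] at hB
  have hp1 : ((2*k+1).choose (k+r+1) : ℝ)
      = ((2*k).choose (k+r) : ℝ) + ((2*k).choose (k+r+1) : ℝ) := by exact_mod_cast congrArg (Nat.cast (R := ℝ)) p1'
  have hp2 : ((2*k+1).choose (k+r+2) : ℝ)
      = ((2*k).choose (k+r+1) : ℝ) + ((2*k).choose (k+r+2) : ℝ) := by exact_mod_cast congrArg (Nat.cast (R := ℝ)) p2'
  push_cast at hA hB
  linear_combination (-(1/2:ℝ)) * hA + (1/2:ℝ) * hB + ((k:ℝ)+1) * hp1 - ((k:ℝ)+1) * hp2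

lemma abel (A g : ℕ → ℝ) (k : ℕ) :
    ∑ s ∈ Finset.range (k+1), (-1:ℝ)^(s+1) * (A s - A (s+2)) * g (s+1)
      - ∑ s ∈ Finset.range k, (-1:ℝ)^(s+1) * A (s+1) * (g s - g (s+2))
    = (A 1 * g 0 - A 0 * g 1) - (-1:ℝ)^k * A (k+1) * g k
      - (-1:ℝ)^(k+1) * A (k+2) * g (k+1) := by
  induction k with
  | zero => simp; ring
  | succ k ih =>
    rw [Finset.sum_range_succ, Finset.sum_range_succ (f := fun s => (-1:ℝ)^(s+1) * A (s+1) * (g s - g (s+2)))]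
    have hps : ((-1:ℝ))^(k+1+1) = (-1:ℝ)^k := by
      rw [pow_succ, pow_succ]; ring
    linear_combination ih

variable {q : ℝ} (hq : q ∈ Set.Ioo (-1 : ℝ) 0)
include hq

lemma pair_term (k s : ℕ) (hs : s ≤ k) :
    ((-1:ℝ)^((s:ℤ)+1) * ((2*k+2).choose (((k:ℤ)+1+((s:ℤ)+1)).toNat) : ℝ)
        * ((((s:ℤ)+1 : ℤ) : ℝ)/(1+q^((s:ℤ)+1))))
      + ((-1:ℝ)^(-((s:ℤ)+1)) * ((2*k+2).choose (((k:ℤ)+1+(-((s:ℤ)+1))).toNat) : ℝ)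
        * (((-((s:ℤ)+1) : ℤ) : ℝ)/(1+q^(-((s:ℤ)+1)))))
    = (-1:ℝ)^(s+1) * ((2*k+2).choose (k+s+2) : ℝ)
        * (((s:ℝ)+1) * (2 * fq q (s+1) - 1)) := by
  have hx : q ^ (s+1) ≠ 0 := pow_ne_zero _ (ne_of_lt hq.2)
  have hden : (1:ℝ) + q ^ (s+1) ≠ 0 := (denom_pos hq (s+1)).ne'
  have hc1 : ((s:ℤ)+1) = ((s+1 : ℕ) : ℤ) := by push_cast; ring
  have hzp : q ^ ((s:ℤ)+1) = q ^ (s+1 : ℕ) := by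
    rw [hc1, zpow_natCast]
  have hzpn : q ^ (-((s:ℤ)+1)) = (q ^ (s+1 : ℕ))⁻¹ := by
    rw [zpow_neg, hzp]
  have hm1 : ((-1:ℝ))^((s:ℤ)+1) = (-1:ℝ)^(s+1 : ℕ) := by
    rw [hc1, zpow_natCast]
  have hm1n : ((-1:ℝ))^(-((s:ℤ)+1)) = (-1:ℝ)^(s+1 : ℕ) := by
    rw [zpow_neg, hm1]
    rcases Nat.even_or_odd (s+1) with he | ho
    · rw [he.neg_one_pow]; norm_num
    · rw [ho.neg_one_pow]; norm_num
  have ht1 : (((k:ℤ)+1+((s:ℤ)+1)).toNat) = k+s+2 := by omega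
  have ht2 : (((k:ℤ)+1+(-((s:ℤ)+1))).toNat) = k - s := by omega
  have hsymm : (2*k+2).choose (k - s) = (2*k+2).choose (k+s+2) := by
    have h1 : 2*k+2 - (k+s+2) = k - s := by omega
    rw [← h1, Nat.choose_symm (by omega)]
  rw [hzp, hzpn, hm1, hm1n, ht1, ht2, hsymm]
  have harg : ((-((s:ℤ)+1) : ℤ) : ℝ) = -((s:ℝ)+1) := by push_cast; ring
  have harg2 : ((((s:ℤ)+1 : ℤ)) : ℝ) = (s:ℝ)+1 := by push_cast; ring
  rw [harg, harg2, fq]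
  have he : (1:ℝ) + (q ^ (s+1))⁻¹ = (q ^ (s+1) + 1)/(q ^ (s+1)) := by field_simp
  have hden1 : q ^ (s+1) + 1 ≠ 0 := by rw [add_comm]; exact hden
  have hkey : -((s:ℝ)+1)/(1+(q^(s+1))⁻¹) = ((s:ℝ)+1) / (1+q^(s+1)) - ((s:ℝ)+1) := by
    rw [he]
    field_simp
    ring
  rw [hkey]
  ring

omit hq in
lemma sum_split (k : ℕ) (T : ℤ → ℝ) (hT0 : T 0 = 0) :
    ∑ r ∈ Finset.Icc (-(k:ℤ)-1) ((k:ℤ)+1), T r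
      = ∑ s ∈ Finset.range (k+1), (T ((s:ℤ)+1) + T (-((s:ℤ)+1))) := by
  have hsplit : Finset.Icc (-(k:ℤ)-1) ((k:ℤ)+1)
      = Finset.Icc (-(k:ℤ)-1) 0 ∪ Finset.Ioc (0:ℤ) ((k:ℤ)+1) := by
    apply Finset.coe_injective
    rw [Finset.coe_union, Finset.coe_Icc, Finset.coe_Icc, Finset.coe_Ioc]
    exact (Set.Icc_union_Ioc_eq_Icc (by omega) (by omega)).symm
  have hdisj : Disjoint (Finset.Icc (-(k:ℤ)-1) 0) (Finset.Ioc (0:ℤ) ((k:ℤ)+1)) := by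
    apply Finset.disjoint_left.2
    intro a ha hb
    rw [Finset.mem_Icc] at ha
    rw [Finset.mem_Ioc] at hb
    omega
  rw [hsplit, Finset.sum_union hdisj]
  have himg1 : Finset.Ioc (0:ℤ) ((k:ℤ)+1)
      = Finset.image (fun s : ℕ => (s:ℤ)+1) (Finset.range (k+1)) := by
    ext r
    simp only [Finset.mem_Ioc, Finset.mem_image, Finset.mem_range]
    constructor
    · intro h
      exact ⟨(r-1).toNat, by omega, by omega⟩
    · rintro ⟨s, hs, rfl⟩
      omega
  have himg2 : Finset.Icc (-(k:ℤ)-1) 0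
      = Finset.image (fun s : ℕ => -((s:ℤ))) (Finset.range (k+2)) := by
    ext r
    simp only [Finset.mem_Icc, Finset.mem_image, Finset.mem_range]
    constructor
    · intro h
      exact ⟨(-r).toNat, by omega, by omega⟩
    · rintro ⟨s, hs, rfl⟩
      omega
  rw [himg1, himg2]
  rw [Finset.sum_image (by intro a _ b _ h; simpa using h),
    Finset.sum_image (by intro a _ b _ h; simpa using h)]
  rw [Finset.sum_range_succ' (fun s : ℕ => T (-(s:ℤ))) (k+1)]
  simp only [Nat.cast_zero, neg_zero, hT0, add_zero]
  rw [← Finset.sum_add_distrib]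
  apply Finset.sum_congr rfl
  intro s _
  have : (-((s:ℤ)+1)) = -(((s+1:ℕ) : ℤ)) := by push_cast; ring
  rw [this]
  push_cast
  ring

end algebra

section assemble
variable {q : ℝ} (hq : q ∈ Set.Ioo (-1 : ℝ) 0)
include hq

lemma algebra_id (k : ℕ) :
    (q + 1) / (q - 1) * (1 / ((k:ℝ) + 1)) *
        ∑ r ∈ Finset.Icc (-(k : ℤ) - 1) ((k : ℤ) + 1),
          (-1 : ℝ) ^ r * (((2 * k + 2).choose (((k : ℤ) + 1 + r).toNat)) : ℝ) *
            ((r : ℝ) / (1 + q ^ r))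
    = (((2*k).choose k : ℝ))
        + 2 * ∑ r ∈ Finset.range k, bq q r * (((2*k).choose (k + (r+1))) : ℝ) := by
  have hk1 : ((k:ℝ) + 1) ≠ 0 := by positivity
  have hq1 : q - 1 ≠ 0 := by have := hq.2; intro h; nlinarith
  have h1q' : (1:ℝ) + q ≠ 0 := (h1q hq).ne'
  set A : ℕ → ℝ := fun s => (((2*k).choose (k+s)) : ℝ) with hA
  set g : ℕ → ℝ := fun s => 2 * fq q s - 1 with hg
  have hT0 : ((-1 : ℝ) ^ (0:ℤ) * (((2 * k + 2).choose (((k : ℤ) + 1 + 0).toNat)) : ℝ)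
      * (((0:ℤ) : ℝ) / (1 + q ^ (0:ℤ)))) = 0 := by
    simp
  rw [sum_split k _ hT0]
  have hstep : ∀ s ∈ Finset.range (k+1),
      ((-1:ℝ)^((s:ℤ)+1) * (((2*k+2).choose (((k:ℤ)+1+((s:ℤ)+1)).toNat)) : ℝ)
        * ((((s:ℤ)+1 : ℤ) : ℝ)/(1+q^((s:ℤ)+1))))
      + ((-1:ℝ)^(-((s:ℤ)+1)) * (((2*k+2).choose (((k:ℤ)+1+(-((s:ℤ)+1))).toNat)) : ℝ)
        * (((-((s:ℤ)+1) : ℤ) : ℝ)/(1+q^(-((s:ℤ)+1)))))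
      = ((k:ℝ)+1) * ((-1:ℝ)^(s+1) * (A s - A (s+2)) * g (s+1)) := by
    intro s hsr
    rw [Finset.mem_range] at hsr
    have hs : s ≤ k := by omega
    rw [pair_term hq k s hs]
    have hb := bino k s hs
    have e1 : k + s + 2 = k + (s + 2) := by omega
    have e2 : (k+s : ℕ) = k + s := rfl
    rw [hA, hg]
    simp only []
    rw [show (2*k).choose (k+(s+2)) = (2*k).choose (k+s+2) by rw [← e1]]
    linear_combination ((-1:ℝ)^(s+1) * (2 * fq q (s+1) - 1)) * hb
  rw [Finset.sum_congr rfl hstep]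
  rw [← Finset.mul_sum]
  have habel := abel A g k
  have hA1 : A (k+1) = 0 := by
    rw [hA]
    simp only []
    rw [Nat.choose_eq_zero_of_lt (by omega)]
    norm_num
  have hA2 : A (k+2) = 0 := by
    rw [hA]
    simp only []
    rw [Nat.choose_eq_zero_of_lt (by omega)]
    norm_num
  have hg0 : g 0 = 0 := by
    rw [hg]
    simp only [fq]
    norm_num
  rw [hA1, hA2, hg0] at habel
  have hE : ∑ s ∈ Finset.range (k+1), (-1:ℝ)^(s+1) * (A s - A (s+2)) * g (s+1)
      = ∑ s ∈ Finset.range k, (-1:ℝ)^(s+1) * A (s+1) * (g s - g (s+2)) - A 0 * g 1 := by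
    linear_combination habel
  rw [hE]
  have hcancel : (q + 1) / (q - 1) * (1 / ((k:ℝ) + 1)) * (((k:ℝ)+1) *
      (∑ s ∈ Finset.range k, (-1:ℝ)^(s+1) * A (s+1) * (g s - g (s+2)) - A 0 * g 1))
      = (q + 1) / (q - 1) *
        (∑ s ∈ Finset.range k, (-1:ℝ)^(s+1) * A (s+1) * (g s - g (s+2)) - A 0 * g 1) := by
    field_simp
  rw [hcancel]
  rw [mul_sub]
  have hS2 : (q + 1) / (q - 1) * ∑ s ∈ Finset.range k, (-1:ℝ)^(s+1) * A (s+1) * (g s - g (s+2))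
      = 2 * ∑ r ∈ Finset.range k, bq q r * (((2*k).choose (k + (r+1))) : ℝ) := by
    rw [Finset.mul_sum, Finset.mul_sum]
    apply Finset.sum_congr rfl
    intro s _
    have hc := c_eq hq s
    rw [bq, hA, hg]
    simp only [fq] at hc ⊢
    have e3 : k + (s+1) = k + s + 1 := by omega
    rw [e3]
    linear_combination (-2 * (-1:ℝ)^(s+1) * (((2*k).choose (k+s+1)) : ℝ)) * hc
  rw [hS2]
  have hlast : (q + 1) / (q - 1) * (A 0 * g 1) = -(((2*k).choose k : ℝ)) := by
    rw [hA, hg]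
    simp only [fq]
    rw [show k + 0 = k from rfl]
    rw [pow_one]
    field_simp
    ring
  rw [hlast]
  ring

end assemble


theorem stmt0 (q : ℝ) (hq : q ∈ Set.Ioo (-1 : ℝ) 0) :
    (∀ k : ℕ, ∫ x, x ^ (2 * k) ∂(muQ q) =
      (q + 1) / (q - 1) * (1 / (k + 1)) *
        ∑ r ∈ Finset.Icc (-(k : ℤ) - 1) ((k : ℤ) + 1),
          (-1 : ℝ) ^ r * (Nat.choose (2 * k + 2) ((k : ℤ) + 1 + r).toNat : ℝ) *
            ((r : ℝ) / (1 + q ^ r)))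
    ∧ (∀ k : ℕ, ∫ x, x ^ (2 * k + 1) ∂(muQ q) = 0) := by
  constructor
  · intro k
    exact (moment_even hq k).trans (algebra_id hq k).symm
  · intro k
    exact moment_odd hq k
end

section
/- Let q ∈ (−1,0) and let z ∈ ℂ with |z| = 1. Then (1+q)/(1−q) · ( 1 − z² + 2(1 − z⁴) ∑_{k=1}^∞ (−1)^k q^k/(1 + q^k z²) ) = 1 + 2 ∑_{r=1}^∞ (−1)^r c_r(q) z^{2r}, where both series converge absolutely (for k ≥ 1 one has |q^k z²| < 1, so 1 + q^k z² ≠ 0). -/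
set_option maxHeartbeats 1000000

theorem stmt2_aux (q : ℝ) (hq1 : -1 < q) (hq2 : q < 0) (w : ℂ) (hw : ‖w‖ = 1) :
    Summable (fun k : ℕ => (-1 : ℂ) ^ (k + 1) * (q : ℂ) ^ (k + 1) / (1 + (q : ℂ) ^ (k + 1) * w)) ∧
    Summable (fun r : ℕ => (-1 : ℂ) ^ (r + 1) * (circCoeff q (r + 1) : ℂ) * w ^ (r + 1)) ∧
    ((1 + (q : ℂ)) / (1 - (q : ℂ))) *
        (1 - w + 2 * (1 - w ^ 2) *
          ∑' k : ℕ, (-1 : ℂ) ^ (k + 1) * (q : ℂ) ^ (k + 1) / (1 + (q : ℂ) ^ (k + 1) * w)) =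
      1 + 2 * ∑' r : ℕ, (-1 : ℂ) ^ (r + 1) * (circCoeff q (r + 1) : ℂ) * w ^ (r + 1) := by
  have habs : |q| < 1 := abs_lt.2 ⟨hq1, by linarith⟩
  have habs0 : 0 ≤ |q| := abs_nonneg q
  have hpos : 0 < 1 - |q| := by linarith
  set Q : ℂ := (q : ℂ) with hQdef
  have hQn : ‖Q‖ = |q| := by rw [hQdef, Complex.norm_real, Real.norm_eq_abs]
  -- lower bound on denominators
  have hlow : ∀ x : ℂ, ‖x‖ ≤ |q| → 1 - |q| ≤ ‖1 + x‖ := by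
    intro x hx
    have h1 : ‖(1 : ℂ)‖ ≤ ‖1 + x‖ + ‖x‖ := by
      calc ‖(1 : ℂ)‖ = ‖(1 + x) - x‖ := by ring_nf
        _ ≤ ‖1 + x‖ + ‖x‖ := norm_sub_le _ _
    simp only [norm_one] at h1
    linarith
  have hQpow : ∀ s : ℕ, s ≠ 0 → ‖Q ^ s‖ ≤ |q| := by
    intro s hs
    rw [norm_pow, hQn]
    exact pow_le_of_le_one habs0 habs.le hs
  have hne : ∀ s : ℕ, s ≠ 0 → (1 : ℂ) + Q ^ s ≠ 0 := by
    intro s hs h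
    have := hlow _ (hQpow s hs)
    rw [h, norm_zero] at this; linarith
  have hQWn : ∀ s : ℕ, s ≠ 0 → ‖Q ^ s * w‖ ≤ |q| := by
    intro s hs; rw [norm_mul, hw, mul_one]; exact hQpow s hs
  have hnew : ∀ s : ℕ, s ≠ 0 → (1 : ℂ) + Q ^ s * w ≠ 0 := by
    intro s hs h
    have := hlow _ (hQWn s hs)
    rw [h, norm_zero] at this; linarith
  -- the functions
  set f : ℕ → ℂ := fun k => (-1 : ℂ) ^ (k + 1) * Q ^ (k + 1) / (1 + Q ^ (k + 1) * w) with hfdef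
  set t : ℕ → ℂ := fun j => (-1 : ℂ) ^ (j + 1) * (Q ^ (j + 1) / (1 + Q ^ (j + 1))) * w ^ j
    with htdef
  set u : ℕ → ℂ := fun r => (-1 : ℂ) ^ (r + 1) * (circCoeff q (r + 1) : ℂ) * w ^ (r + 1)
    with hudef
  -- cast of the coefficient
  have hcast : ∀ r : ℕ, ((circCoeff q (r + 1) : ℝ) : ℂ) =
      Q ^ r * (1 + Q) ^ 2 / ((1 + Q ^ (r + 2)) * (1 + Q ^ r)) := by
    intro r
    simp only [circCoeff, Nat.add_sub_cancel]
    push_cast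
    rw [hQdef]
  -- the double series
  set g : ℕ × ℕ → ℂ := fun p => (-(Q ^ (p.2 + 1))) ^ (p.1 + 1) * ((-1 : ℂ) ^ p.2 * w ^ p.2)
    with hgdef
  have hgsummable : Summable g := by
    apply Summable.of_norm_bounded (g := fun p : ℕ × ℕ => |q| ^ p.1 * |q| ^ p.2)
    · exact (summable_geometric_of_lt_one habs0 habs).mul_of_nonneg
        (summable_geometric_of_lt_one habs0 habs)
        (fun _ => pow_nonneg habs0 _) (fun _ => pow_nonneg habs0 _)
    · rintro ⟨k, j⟩
      simp only [hgdef, norm_mul, norm_pow, norm_neg, norm_one, one_pow, one_mul, mul_one, hQn, hw]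
      rw [← pow_mul]
      calc |q| ^ ((j + 1) * (k + 1)) ≤ |q| ^ (k + j) :=
            pow_le_pow_of_le_one habs0 habs.le (by nlinarith)
        _ = |q| ^ k * |q| ^ j := pow_add _ _ _
  have hfk : ∀ k : ℕ, HasSum (fun j => g (k, j)) (f k) := by
    intro k
    have hx : ‖-(Q ^ (k + 1)) * w‖ < 1 := by
      rw [norm_mul, norm_neg]
      calc ‖Q ^ (k + 1)‖ * ‖w‖ = ‖Q ^ (k + 1) * w‖ := (norm_mul _ _).symm
        _ ≤ |q| := hQWn _ (Nat.succ_ne_zero k)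
        _ < 1 := habs
    have h := (hasSum_geometric_of_norm_lt_one hx).mul_left ((-1 : ℂ) ^ (k + 1) * Q ^ (k + 1))
    have he1 : (fun j => (-1 : ℂ) ^ (k + 1) * Q ^ (k + 1) * (-(Q ^ (k + 1)) * w) ^ j)
        = fun j => g (k, j) := by
      funext j; simp only [hgdef]; ring
    have he2 : (-1 : ℂ) ^ (k + 1) * Q ^ (k + 1) * (1 - -(Q ^ (k + 1)) * w)⁻¹ = f k := by
      rw [hfdef]
      simp only
      rw [div_eq_mul_inv]
      ring_nf
    rw [he1, he2] at h
    exact h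
  have htj : ∀ j : ℕ, HasSum (fun k => g (k, j)) (t j) := by
    intro j
    have hy : ‖-(Q ^ (j + 1))‖ < 1 := by
      rw [norm_neg]
      exact lt_of_le_of_lt (hQpow _ (Nat.succ_ne_zero j)) habs
    have h := (hasSum_geometric_of_norm_lt_one hy).mul_right
      (-(Q ^ (j + 1)) * ((-1 : ℂ) ^ j * w ^ j))
    have he1 : (fun k => (-(Q ^ (j + 1))) ^ k * (-(Q ^ (j + 1)) * ((-1 : ℂ) ^ j * w ^ j)))
        = fun k => g (k, j) := by
      funext k; simp only [hgdef]; ring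
    have he2 : (1 - -(Q ^ (j + 1)))⁻¹ * (-(Q ^ (j + 1)) * ((-1 : ℂ) ^ j * w ^ j)) = t j := by
      rw [htdef]
      simp only
      rw [div_eq_mul_inv]
      have : (1 : ℂ) - -(Q ^ (j + 1)) = 1 + Q ^ (j + 1) := by ring
      rw [this]
      ring
    rw [he1, he2] at h
    exact h
  have hfsum : HasSum f (∑' p, g p) := hgsummable.hasSum.prod_fiberwise hfk
  have htsum : HasSum t (∑' p, g p) := by
    have hswap : Summable fun p : ℕ × ℕ => g (Equiv.prodComm ℕ ℕ p) :=
      (Equiv.prodComm ℕ ℕ).summable_iff.2 hgsummable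
    have htot : ∑' p, g (Equiv.prodComm ℕ ℕ p) = ∑' p, g p :=
      (Equiv.prodComm ℕ ℕ).tsum_eq g
    have := hswap.hasSum.prod_fiberwise (g := t) ?_
    · rwa [htot] at this
    · intro j
      exact htj j
  have ht : Summable t := htsum.summable
  have hf : Summable f := hfsum.summable
  -- summability of u
  have hRlow : ∀ s : ℕ, 1 - |q| ≤ |1 + q ^ s| := by
    intro s
    cases s with
    | zero =>
        have h20 : |1 + q ^ (0:ℕ)| = 2 := by norm_num
        rw [h20]; linarith
    | succ n =>
        have h1 : |q ^ (n + 1)| ≤ |q| := by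
          rw [abs_pow]; exact pow_le_of_le_one habs0 habs.le (Nat.succ_ne_zero n)
        have h2 := neg_abs_le (q ^ (n + 1))
        have h3 := le_abs_self (q ^ (n + 1))
        rw [abs_of_pos (by nlinarith : (0:ℝ) < 1 + q ^ (n + 1))]
        nlinarith
  have hu : Summable u := by
    apply Summable.of_norm_bounded (g := fun r => ((1 - |q|)⁻¹ * (1 - |q|)⁻¹) * |q| ^ r)
    · exact (summable_geometric_of_lt_one habs0 habs).mul_left _
    · intro r
      rw [hudef]
      simp only [norm_mul, norm_pow, norm_neg, norm_one, one_pow, one_mul, hw,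
        Complex.norm_real, Real.norm_eq_abs, mul_one]
      unfold circCoeff
      rw [Nat.add_sub_cancel]
      rw [abs_div, abs_mul, abs_mul, abs_pow, abs_pow]
      have hb1 : |1 + q| ≤ 1 := by
        rw [abs_of_pos (by linarith)]; linarith
      have hd1 := hRlow (r + 1 + 1)
      have hd2 := hRlow r
      calc |q| ^ r * |1 + q| ^ 2 / (|1 + q ^ (r + 1 + 1)| * |1 + q ^ r|)
          ≤ |q| ^ r * 1 ^ 2 / ((1 - |q|) * (1 - |q|)) := by
            gcongr <;> first
              | exact mul_pos hpos hpos
              | exact pow_nonneg habs0 r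
              | exact hb1
              | exact hd1
              | exact hd2
              | positivity
        _ = (1 - |q|)⁻¹ * (1 - |q|)⁻¹ * |q| ^ r := by
            rw [one_pow, mul_one]; field_simp
    -- end
  refine ⟨hf, hu, ?_⟩
  -- shifted summabilities
  have ht1 : Summable fun n => t (n + 1) := (summable_nat_add_iff 1).2 ht
  have ht2 : Summable fun n => t (n + 1 + 1) := (summable_nat_add_iff 2).2 ht
  have hu1 : Summable fun n => u (n + 1) := (summable_nat_add_iff 1).2 hu
  set T : ℂ := ∑' j, t j with hTdef
  set U : ℂ := ∑' r, u r with hUdef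
  set A : ℂ := ∑' j, t (j + 1 + 1) with hAdef
  set C : ℂ := ∑' j, u (j + 1) with hCdef
  have hTe : T = t 0 + (t 1 + A) := by
    rw [hTdef, Summable.tsum_eq_zero_add ht, Summable.tsum_eq_zero_add ht1]
  have hUe : U = u 0 + C := by
    rw [hUdef, Summable.tsum_eq_zero_add hu]
  -- pointwise identity
  have key : ∀ j : ℕ,
      2 * (1 + Q) * t (j + 1 + 1) - (2 * (1 + Q) * (w ^ 2 * t j) + 2 * (1 - Q) * u (j + 1)) = 0 := by
    intro j
    simp only [htdef, hudef, hcast (j + 1)]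
    have d1 : (1 : ℂ) + Q ^ (j + 1) ≠ 0 := hne (j + 1) (by omega)
    have d2 : (1 : ℂ) + Q ^ (j + 1 + 1 + 1) ≠ 0 := hne (j + 1 + 1 + 1) (by omega)
    have d3 : (1 : ℂ) + Q ^ (j + 1 + 2) ≠ 0 := hne (j + 1 + 2) (by omega)
    field_simp
    ring
  have e4 : 2 * (1 + Q) * A - (2 * (1 + Q) * (w ^ 2 * T) + 2 * (1 - Q) * C) = 0 := by
    have hB : w ^ 2 * T = ∑' j, w ^ 2 * t j := (ht.tsum_mul_left (w ^ 2)).symm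
    rw [hAdef, hCdef, hB, ← Summable.tsum_mul_left (2 * (1 + Q)) ht2,
      ← Summable.tsum_mul_left (2 * (1 + Q)) (ht.mul_left (w ^ 2)),
      ← Summable.tsum_mul_left (2 * (1 - Q)) hu1,
      ← Summable.tsum_add ((ht.mul_left (w ^ 2)).mul_left _) (hu1.mul_left _),
      ← Summable.tsum_sub (ht2.mul_left _) (((ht.mul_left (w ^ 2)).mul_left _).add (hu1.mul_left _))]
    exact (tsum_congr key).trans tsum_zero
  -- evaluate the small pieces
  have hQ1 : (1 : ℂ) + Q ≠ 0 := by
    have := hne 1 one_ne_zero; rwa [pow_one] at this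
  have hQ2 : (1 : ℂ) + Q ^ 2 ≠ 0 := hne 2 (by omega)
  have h1mQ : (1 : ℂ) - Q ≠ 0 := by
    intro h
    have : Q = 1 := by linear_combination -h
    rw [hQdef] at this
    have : q = 1 := by exact_mod_cast this
    linarith
  have hT'' : (1 + Q) * (1 + Q ^ 2) * T =
      -(Q * (1 + Q ^ 2)) + Q ^ 2 * (1 + Q) * w + (1 + Q) * (1 + Q ^ 2) * A := by
    rw [hTe]
    simp only [htdef]
    norm_num
    field_simp
    ring
  have hU'' : 2 * (1 + Q ^ 2) * U = -((1 + Q) ^ 2) * w + 2 * (1 + Q ^ 2) * C := by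
    rw [hUe]
    simp only [hudef, hcast 0]
    field_simp
    ring
  have hA : 2 * (1 + Q) * A = 2 * (1 + Q) * (w ^ 2 * T) + 2 * (1 - Q) * C := by
    linear_combination e4
  have hnz : (2 : ℂ) * (1 + Q) * (1 + Q ^ 2) ≠ 0 := by
    exact mul_ne_zero (mul_ne_zero two_ne_zero hQ1) hQ2
  have P2 : 2 * (1 + Q) * (1 + Q ^ 2) * ((1 + Q) * (1 - w + 2 * (1 - w ^ 2) * T)) =
      2 * (1 + Q) * (1 + Q ^ 2) * ((1 + 2 * U) * (1 - Q)) := by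
    linear_combination (4 * (1 + Q)) * hT'' + (2 * (1 + Q) * (1 + Q ^ 2)) * hA +
      (-2 * (1 + Q) * (1 - Q)) * hU''
  have P : (1 + Q) * (1 - w + 2 * (1 - w ^ 2) * T) = (1 + 2 * U) * (1 - Q) :=
    mul_left_cancel₀ hnz P2
  have hft : ∑' k, f k = T := by rw [hTdef, hfsum.tsum_eq, ← htsum.tsum_eq]
  rw [hft]
  rw [div_mul_eq_mul_div, div_eq_iff h1mQ, P]

theorem stmt2 (q : ℝ) (hq : q ∈ Set.Ioo (-1 : ℝ) 0) (z : ℂ) (hz : ‖z‖ = 1) :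
    Summable (fun k : ℕ => (-1 : ℂ) ^ (k + 1) * (q : ℂ) ^ (k + 1) / (1 + (q : ℂ) ^ (k + 1) * z ^ 2)) ∧
    Summable (fun r : ℕ => (-1 : ℂ) ^ (r + 1) * (circCoeff q (r + 1) : ℂ) * z ^ (2 * (r + 1))) ∧
    ((1 + (q : ℂ)) / (1 - (q : ℂ))) *
        (1 - z ^ 2 + 2 * (1 - z ^ 4) *
          ∑' k : ℕ, (-1 : ℂ) ^ (k + 1) * (q : ℂ) ^ (k + 1) / (1 + (q : ℂ) ^ (k + 1) * z ^ 2)) =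
      1 + 2 * ∑' r : ℕ, (-1 : ℂ) ^ (r + 1) * (circCoeff q (r + 1) : ℂ) * z ^ (2 * (r + 1)) := by
  have hw : ‖z ^ 2‖ = 1 := by rw [norm_pow, hz, one_pow]
  have H := stmt2_aux q hq.1 hq.2 (z ^ 2) hw
  have hp : ∀ r : ℕ, z ^ (2 * (r + 1)) = (z ^ 2) ^ (r + 1) := fun r => by rw [pow_mul]
  have hp4 : z ^ 4 = (z ^ 2) ^ 2 := by ring
  simp only [hp, hp4]
  exact H
end

section
/- Let q ∈ (−1,0) and let z ∈ ℂ with |z| = 1 and z² ≠ −1. Then G_q(z) = (1+q)/(1−q) · ( 1 − z² + 2(1 − z⁴) ∑_{k=1}^∞ (−1)^k q^k/(1 + q^k z²) ), the series on the right converging absolutely. -/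
/-- The function `G_q(z)` of Theorem 4.2:
`(1-q²)(1-z⁴) ∑_{k≥0} q^{2k}(1-q^{2k+1}z²) / ((1+q^{2k}z²)(1+q^{2k+1}z²)(1+q^{2k+2}z²))`. -/
noncomputable def Gfun (q : ℝ) (z : ℂ) : ℂ :=
  (1 - (q : ℂ) ^ 2) * (1 - z ^ 4) *
    ∑' k : ℕ, (q : ℂ) ^ (2 * k) * (1 - (q : ℂ) ^ (2 * k + 1) * z ^ 2) /
      ((1 + (q : ℂ) ^ (2 * k) * z ^ 2) * (1 + (q : ℂ) ^ (2 * k + 1) * z ^ 2) *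
        (1 + (q : ℂ) ^ (2 * k + 2) * z ^ 2))

/-- Generic partial-fraction decomposition used for the summand of `Gfun`. -/
lemma pf_decomp (q a w : ℂ) (h1 : 1 + a * w ≠ 0) (h2 : 1 + a * q * w ≠ 0)
    (h3 : 1 + a * q ^ 2 * w ≠ 0) (hq : 1 - q ≠ 0) :
    a * (1 - a * q * w) / ((1 + a * w) * (1 + a * q * w) * (1 + a * q ^ 2 * w))
      = ((1 - q) ^ 2)⁻¹ *
        (a / (1 + a * w) - 2 * (a * q / (1 + a * q * w)) + a * q ^ 2 / (1 + a * q ^ 2 * w)) := by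
  field_simp
  ring

theorem stmt3 (q : ℝ) (hq : q ∈ Set.Ioo (-1 : ℝ) 0) (z : ℂ) (hz : ‖z‖ = 1)
    (hz2 : z ^ 2 ≠ -1) :
    Summable (fun k : ℕ => (-1 : ℂ) ^ (k + 1) * (q : ℂ) ^ (k + 1) / (1 + (q : ℂ) ^ (k + 1) * z ^ 2)) ∧
    Gfun q z = ((1 + (q : ℂ)) / (1 - (q : ℂ))) *
      (1 - z ^ 2 + 2 * (1 - z ^ 4) *
        ∑' k : ℕ, (-1 : ℂ) ^ (k + 1) * (q : ℂ) ^ (k + 1) / (1 + (q : ℂ) ^ (k + 1) * z ^ 2)) := by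
  obtain ⟨hq1, hq0⟩ := hq
  have hr1 : |q| < 1 := abs_lt.mpr ⟨hq1, hq0.trans one_pos⟩
  have h1r : (0 : ℝ) < 1 - |q| := by linarith
  have hqc : ‖(q : ℂ)‖ = |q| := by simp [Complex.norm_real]
  have hz2n : ‖z ^ 2‖ = 1 := by rw [norm_pow, hz, one_pow]
  -- denominators are nonzero
  have hne : ∀ n : ℕ, (1 + (q : ℂ) ^ n * z ^ 2) ≠ 0 := by
    intro n
    cases n with
    | zero =>
      simp only [pow_zero, one_mul]
      intro h
      exact hz2 (by linear_combination h)
    | succ m =>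
      intro h
      have h1 : (q : ℂ) ^ (m + 1) * z ^ 2 = -1 := by linear_combination h
      have h2 : ‖(q : ℂ) ^ (m + 1) * z ^ 2‖ = |q| ^ (m + 1) := by
        rw [norm_mul, norm_pow, hqc, hz2n, mul_one]
      rw [h1] at h2
      simp only [norm_neg, norm_one] at h2
      have : |q| ^ (m + 1) < 1 := pow_lt_one₀ (abs_nonneg q) hr1 (Nat.succ_ne_zero m)
      rw [← h2] at this; exact lt_irrefl _ this
  -- lower bound on denominators for n ≥ 1
  have hlb : ∀ m : ℕ, 1 - |q| ≤ ‖1 + (q : ℂ) ^ (m + 1) * z ^ 2‖ := by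
    intro m
    have h2 : ‖(q : ℂ) ^ (m + 1) * z ^ 2‖ = |q| ^ (m + 1) := by
      rw [norm_mul, norm_pow, hqc, hz2n, mul_one]
    have h3 : |q| ^ (m + 1) ≤ |q| := by
      calc |q| ^ (m + 1) ≤ |q| ^ 1 :=
        pow_le_pow_of_le_one (abs_nonneg q) hr1.le (Nat.one_le_iff_ne_zero.mpr (Nat.succ_ne_zero m))
      _ = |q| := pow_one _
    calc 1 - |q| ≤ 1 - ‖(q : ℂ) ^ (m + 1) * z ^ 2‖ := by rw [h2]; linarith
    _ ≤ ‖1 + (q : ℂ) ^ (m + 1) * z ^ 2‖ := by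
        have := norm_sub_norm_le (1 : ℂ) (-((q : ℂ) ^ (m + 1) * z ^ 2))
        simpa [sub_neg_eq_add] using this
  set f : ℕ → ℂ := fun n => (q : ℂ) ^ n / (1 + (q : ℂ) ^ n * z ^ 2) with hf
  set g : ℕ → ℂ := fun n => (-1 : ℂ) ^ n * f n with hg
  -- summability of f
  have hfs : Summable f := by
    rw [← summable_nat_add_iff 1]
    apply Summable.of_norm_bounded (g := fun n => (|q| / (1 - |q|)) * |q| ^ n)
    · exact (summable_geometric_of_lt_one (abs_nonneg q) hr1).mul_left _
    · intro n
      have hDpos : (0 : ℝ) < ‖1 + (q : ℂ) ^ (n + 1) * z ^ 2‖ := lt_of_lt_of_le h1r (hlb n)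
      simp only [hf, norm_div, norm_pow, hqc]
      rw [div_le_iff₀ hDpos]
      have hnn : 0 ≤ |q| / (1 - |q|) * |q| ^ n :=
        mul_nonneg (div_nonneg (abs_nonneg q) h1r.le) (pow_nonneg (abs_nonneg q) n)
      calc |q| ^ (n + 1) = |q| / (1 - |q|) * |q| ^ n * (1 - |q|) := by
            field_simp
            ring
      _ ≤ |q| / (1 - |q|) * |q| ^ n * ‖1 + (q : ℂ) ^ (n + 1) * z ^ 2‖ :=
            mul_le_mul_of_nonneg_left (hlb n) hnn
  have hgs : Summable g := by
    rw [← summable_norm_iff]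
    refine hfs.norm.congr fun n => ?_
    simp [hg, norm_mul]
  -- the target series is `g` shifted by one
  have htarget : (fun k : ℕ => (-1 : ℂ) ^ (k + 1) * (q : ℂ) ^ (k + 1) / (1 + (q : ℂ) ^ (k + 1) * z ^ 2))
      = fun k => g (k + 1) := by
    funext k; simp [hg, hf, mul_div_assoc]
  have hsum1 : Summable (fun k : ℕ => (-1 : ℂ) ^ (k + 1) * (q : ℂ) ^ (k + 1) / (1 + (q : ℂ) ^ (k + 1) * z ^ 2)) := by
    rw [htarget]; exact (summable_nat_add_iff 1).mpr hgs
  refine ⟨hsum1, ?_⟩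
  -- nonzero scalars
  have hq1c : (1 - (q : ℂ)) ≠ 0 :=
    sub_ne_zero.mpr (by exact_mod_cast (show (1 : ℝ) ≠ q by linarith))
  -- partial fraction decomposition of the summand
  have hterm : ∀ k : ℕ,
      (q : ℂ) ^ (2 * k) * (1 - (q : ℂ) ^ (2 * k + 1) * z ^ 2) /
        ((1 + (q : ℂ) ^ (2 * k) * z ^ 2) * (1 + (q : ℂ) ^ (2 * k + 1) * z ^ 2) *
          (1 + (q : ℂ) ^ (2 * k + 2) * z ^ 2))
      = ((1 - (q : ℂ)) ^ 2)⁻¹ * (f (2 * k) - 2 * f (2 * k + 1) + f (2 * k + 2)) := by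
    intro k
    have e1 : (q : ℂ) ^ (2 * k + 1) = (q : ℂ) ^ (2 * k) * (q : ℂ) := pow_succ _ _
    have e2 : (q : ℂ) ^ (2 * k + 2) = (q : ℂ) ^ (2 * k) * (q : ℂ) ^ 2 := by
      rw [pow_add]
    have d1 := hne (2 * k); have d2 := hne (2 * k + 1); have d3 := hne (2 * k + 2)
    rw [e1] at d2; rw [e2] at d3
    simp only [hf, e1, e2]
    exact pf_decomp (q : ℂ) ((q : ℂ) ^ (2 * k)) (z ^ 2) d1 d2 d3 hq1c
  -- summability of the pieces
  have hge : Summable (fun k : ℕ => g (2 * k)) :=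
    hgs.comp_injective (fun a b h => by omega)
  have hgo : Summable (fun k : ℕ => g (2 * k + 1)) :=
    hgs.comp_injective (fun a b h => by omega)
  have hge2 : Summable (fun k : ℕ => g (2 * k + 2)) :=
    hgs.comp_injective (fun a b h => by omega)
  -- relate f at even/odd arguments to g
  have hfeg : ∀ k : ℕ, f (2 * k) = g (2 * k) := by
    intro k; simp [hg, pow_mul]
  have hfog : ∀ k : ℕ, f (2 * k + 1) = -g (2 * k + 1) := by
    intro k; simp [hg, pow_succ, pow_mul]
  have hfe2g : ∀ k : ℕ, f (2 * k + 2) = g (2 * k + 2) := by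
    intro k
    simp only [hg]
    rw [show 2 * k + 2 = 2 * (k + 1) by ring, pow_mul]
    simp
  -- the main series computation
  have hS : ∑' k : ℕ, (f (2 * k) - 2 * f (2 * k + 1) + f (2 * k + 2))
      = g 0 + 2 * ∑' n : ℕ, g (n + 1) := by
    have e1 : ∀ k : ℕ, f (2 * k) - 2 * f (2 * k + 1) + f (2 * k + 2)
        = (g (2 * k) + g (2 * k + 1)) + (g (2 * k + 1) + g (2 * k + 2)) := by
      intro k; rw [hfeg, hfog, hfe2g]; ring
    rw [tsum_congr e1, Summable.tsum_add (hge.add hgo) (hgo.add hge2),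
        Summable.tsum_add hge hgo, Summable.tsum_add hgo hge2]
    have h1 : (∑' k : ℕ, g (2 * k)) + ∑' k : ℕ, g (2 * k + 1) = ∑' n : ℕ, g n :=
      tsum_even_add_odd hge hgo
    have h2 : (∑' k : ℕ, g (2 * k + 1)) + ∑' k : ℕ, g (2 * k + 2) = ∑' n : ℕ, g (n + 1) := by
      have := tsum_even_add_odd (f := fun n => g (n + 1))
        (hgs.comp_injective (i := fun k : ℕ => 2 * k + 1) (fun a b h => by dsimp only at h; omega))
        (hgs.comp_injective (i := fun k : ℕ => 2 * k + 2) (fun a b h => by dsimp only at h; omega))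
      simpa [Nat.add_assoc] using this
    have h3 : ∑' n : ℕ, g n = g 0 + ∑' n : ℕ, g (n + 1) := Summable.tsum_eq_zero_add hgs
    rw [h1, h2, h3]; ring
  -- assemble
  have hGsum : ∑' k : ℕ, ((q : ℂ) ^ (2 * k) * (1 - (q : ℂ) ^ (2 * k + 1) * z ^ 2) /
      ((1 + (q : ℂ) ^ (2 * k) * z ^ 2) * (1 + (q : ℂ) ^ (2 * k + 1) * z ^ 2) *
        (1 + (q : ℂ) ^ (2 * k + 2) * z ^ 2)))
      = ((1 - (q : ℂ)) ^ 2)⁻¹ * (g 0 + 2 * ∑' n : ℕ, g (n + 1)) := by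
    rw [tsum_congr hterm, tsum_mul_left, hS]
  rw [Gfun, hGsum, htarget]
  have hg0 : g 0 = 1 / (1 + z ^ 2) := by simp [hg, hf]
  rw [hg0]
  have hz2ne : (1 + z ^ 2) ≠ 0 := by simpa using hne 0
  set S : ℂ := ∑' n : ℕ, g (n + 1)
  field_simp
  ring
end

section
/- Let q ∈ (−1,0). Then F_q(t) ≥ 0 for every t ∈ ℝ. -/
theorem stmt5 (q : ℝ) (hq : q ∈ Set.Ioo (-1 : ℝ) 0) :
    ∀ t : ℝ, 0 ≤ circDensity q t := by
  obtain ⟨hq1, hq0⟩ := hq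
  intro t
  have hq1' : 0 < 1 + q := by linarith
  have hqm1 : q - 1 < 0 := by linarith
  -- q ≤ q^s for all s
  have hpow : ∀ s : ℕ, q ≤ q ^ s := by
    intro s
    cases s with
    | zero => simpa using by linarith
    | succ n =>
      have h1 : |q ^ (n + 1)| = (-q) ^ (n + 1) := by
        rw [abs_pow, abs_of_neg hq0]
      have h2 : (-q) ^ (n + 1) ≤ -q := by
        have := pow_le_pow_of_le_one (by linarith : (0:ℝ) ≤ -q)
          (by linarith : -q ≤ 1) (Nat.one_le_iff_ne_zero.mpr (Nat.succ_ne_zero n))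
        simpa using this
      have h3 := neg_abs_le (q ^ (n + 1))
      linarith
  have hDpos : ∀ s : ℕ, 0 < 1 + q ^ s := fun s => by linarith [hpow s]
  have hDge : ∀ s : ℕ, 1 + q ≤ 1 + q ^ s := fun s => by linarith [hpow s]
  set e : ℕ → ℝ := fun r => (-q) ^ r * (1 + q) ^ 2 / ((1 + q ^ (r + 2)) * (1 + q ^ r))
    with he_def
  have hnq_nonneg : ∀ r : ℕ, (0:ℝ) ≤ (-q) ^ r := fun r => pow_nonneg (by linarith) r
  have he_nonneg : ∀ r, 0 ≤ e r := by
    intro r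
    apply div_nonneg
    · exact mul_nonneg (hnq_nonneg r) (sq_nonneg _)
    · exact le_of_lt (mul_pos (hDpos (r + 2)) (hDpos r))
  have he_le : ∀ r, e r ≤ (-q) ^ r := by
    intro r
    rw [he_def]
    have hD : 0 < (1 + q ^ (r + 2)) * (1 + q ^ r) := mul_pos (hDpos (r + 2)) (hDpos r)
    rw [div_le_iff₀ hD]
    have hmm : (1 + q) * (1 + q) ≤ (1 + q ^ (r + 2)) * (1 + q ^ r) :=
      mul_le_mul (hDge (r + 2)) (hDge r) (le_of_lt hq1') (le_of_lt (hDpos (r + 2)))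
    nlinarith [hnq_nonneg r]
  have hgeo : Summable (fun r : ℕ => (-q) ^ r) :=
    summable_geometric_of_lt_one (by linarith) (by linarith)
  have hesum : Summable e := Summable.of_nonneg_of_le he_nonneg he_le hgeo
  -- telescoping
  set A : ℕ → ℝ := fun s => 1 / (1 + q ^ s) with hA_def
  set d : ℕ → ℝ := fun n => (-1 : ℝ) ^ n * (A n - A (n + 1)) with hd_def
  set C : ℝ := (1 + q) / (q - 1) with hC_def
  have hkey : ∀ r, e r = C * (d r - d (r + 1)) := by
    intro r
    rw [he_def, hd_def, hA_def, hC_def]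
    simp only
    have e1 : q ^ (r + 1) = q ^ r * q := by ring
    have e2 : q ^ (r + 2) = q ^ r * q * q := by ring
    have e2' : q ^ (r + 1 + 1) = q ^ r * q * q := by ring
    have e3 : (-q) ^ r = (-1 : ℝ) ^ r * q ^ r := by rw [neg_pow]
    have e4 : (-1 : ℝ) ^ (r + 1) = (-1 : ℝ) ^ r * (-1) := pow_succ (-1) r
    have h1 : 1 + q ^ r ≠ 0 := ne_of_gt (hDpos r)
    have h2 : 1 + q ^ r * q ≠ 0 := by rw [← e1]; exact ne_of_gt (hDpos (r + 1))
    have h3 : 1 + q ^ r * q * q ≠ 0 := by rw [← e2]; exact ne_of_gt (hDpos (r + 2))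
    have h4 : q - 1 ≠ 0 := ne_of_lt hqm1
    rw [e1, e2, e3, e4]
    have h3' : 1 + q ^ r * q ^ 2 ≠ 0 := by rw [pow_two, ← mul_assoc]; exact h3
    field_simp
    ring
  have hpartial : ∀ N, ∑ r ∈ Finset.range N, e r = C * (d 0 - d N) := by
    intro N
    calc ∑ r ∈ Finset.range N, e r = ∑ r ∈ Finset.range N, C * (d r - d (r + 1)) :=
          Finset.sum_congr rfl (fun r _ => hkey r)
      _ = C * ∑ r ∈ Finset.range N, (d r - d (r + 1)) := by rw [Finset.mul_sum]
      _ = C * (d 0 - d N) := by rw [Finset.sum_range_sub' d N]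
  -- d N → 0
  have hq_pow_lim : Filter.Tendsto (fun n : ℕ => q ^ n) Filter.atTop (nhds 0) :=
    tendsto_pow_atTop_nhds_zero_of_abs_lt_one (by rw [abs_of_neg hq0]; linarith)
  have hA_lim : Filter.Tendsto A Filter.atTop (nhds 1) := by
    rw [hA_def]
    have h0 : Filter.Tendsto (fun n : ℕ => 1 + q ^ n) Filter.atTop (nhds 1) := by
      simpa using (tendsto_const_nhds (x := (1:ℝ))).add hq_pow_lim
    have h1 := h0.inv₀ (by norm_num : (1:ℝ) ≠ 0)
    simpa [one_div] using h1
  have hA_lim' : Filter.Tendsto (fun n => A (n + 1)) Filter.atTop (nhds 1) :=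
    hA_lim.comp (Filter.tendsto_add_atTop_nat 1)
  have hdiff_lim : Filter.Tendsto (fun n => A n - A (n + 1)) Filter.atTop (nhds 0) := by
    have := hA_lim.sub hA_lim'
    simpa using this
  have hd_lim : Filter.Tendsto d Filter.atTop (nhds 0) := by
    apply squeeze_zero_norm (f := d) (a := fun n => ‖A n - A (n + 1)‖)
    · intro n
      rw [hd_def]
      simp [abs_mul, abs_pow]
    · simpa using hdiff_lim.norm
  -- partial sums → 1/2
  have hCd0 : C * d 0 = 1 / 2 := by
    rw [hC_def, hd_def, hA_def]
    simp only [pow_zero, zero_add, pow_one]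
    have h1 : (1 : ℝ) + 1 ≠ 0 := by norm_num
    have h2 : 1 + q ≠ 0 := ne_of_gt hq1'
    have h4 : q - 1 ≠ 0 := ne_of_lt hqm1
    field_simp
    ring
  have hlim : Filter.Tendsto (fun N => ∑ r ∈ Finset.range N, e r) Filter.atTop
      (nhds (1 / 2)) := by
    have h : Filter.Tendsto (fun N => C * (d 0 - d N)) Filter.atTop (nhds (C * (d 0 - 0))) :=
      Filter.Tendsto.const_mul C (Filter.Tendsto.sub tendsto_const_nhds hd_lim)
    rw [sub_zero, hCd0] at h
    simpa only [hpartial] using h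
  have htsum_e : ∑' r, e r = 1 / 2 :=
    tendsto_nhds_unique hesum.hasSum.tendsto_sum_nat hlim
  -- the Fourier terms
  set f : ℕ → ℝ := fun r => (-1 : ℝ) ^ (r + 1) * circCoeff q (r + 1) * Real.cos (2 * (r + 1) * t)
    with hf_def
  have hf_eq : ∀ r, f r = -(e r) * Real.cos (2 * (r + 1) * t) := by
    intro r
    rw [hf_def, he_def]
    simp only [circCoeff, Nat.add_sub_cancel]
    have e3 : (-q) ^ r = (-1 : ℝ) ^ r * q ^ r := by rw [neg_pow]
    have e4 : (-1 : ℝ) ^ (r + 1) = (-1 : ℝ) ^ r * (-1) := pow_succ (-1) r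
    rw [e3, e4]
    have : r + 1 + 1 = r + 2 := rfl
    rw [this]
    ring
  have hf_bound : ∀ r, ‖f r‖ ≤ e r := by
    intro r
    rw [hf_eq r]
    rw [norm_mul, norm_neg, Real.norm_eq_abs, Real.norm_eq_abs, abs_of_nonneg (he_nonneg r)]
    calc e r * |Real.cos (2 * (r + 1) * t)| ≤ e r * 1 := by
          apply mul_le_mul_of_nonneg_left (Real.abs_cos_le_one _) (he_nonneg r)
      _ = e r := mul_one _
  have hfsum : Summable f := Summable.of_norm_bounded hesum hf_bound
  have hge : ∀ r, -(e r) ≤ f r := by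
    intro r
    have := hf_bound r
    rw [Real.norm_eq_abs, abs_le] at this
    exact this.1
  have hsum_ge : -(1 / 2 : ℝ) ≤ ∑' r, f r := by
    have h1 : ∑' r, (-(e r)) ≤ ∑' r, f r := Summable.tsum_le_tsum hge hesum.neg hfsum
    have h2 : ∑' r, (-(e r)) = -(1 / 2 : ℝ) := by rw [tsum_neg, htsum_e]
    linarith
  have : circDensity q t = 1 + 2 * ∑' r, f r := rfl
  rw [this]
  linarith
end

section
/- As q → 0⁻, the functions F_q converge uniformly on ℝ to the function t ↦ 2 sin² t (which is the circular density of the standard semicircle distribution); that is, lim_{q→0⁻} sup_{t∈ℝ} |F_q(t) − 2 sin² t| = 0. -/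
lemma pow_ge (q : ℝ) (hq1 : -1/2 ≤ q) (hq2 : q < 0) (s : ℕ) : (1:ℝ)/2 ≤ 1 + q ^ s := by
  rcases s with _ | s
  · norm_num
  · have hq : |q| ≤ 1/2 := by rw [abs_of_neg hq2]; linarith
    have h1 : |q ^ (s+1)| ≤ 1/2 := by
      rw [abs_pow]
      calc |q| ^ (s+1) ≤ |q| ^ 1 := pow_le_pow_of_le_one (abs_nonneg q) (by linarith) (by omega)
        _ ≤ 1/2 := by simpa using hq
    have := neg_abs_le (q ^ (s+1))
    linarith

lemma coeff_bound (q : ℝ) (hq1 : -1/2 ≤ q) (hq2 : q < 0) (r : ℕ) :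
    |circCoeff q (r + 1)| ≤ 4 * |q| ^ r := by
  have h1 : (1:ℝ)/2 ≤ 1 + q ^ (r + 1 + 1) := pow_ge q hq1 hq2 _
  have h2 : (1:ℝ)/2 ≤ 1 + q ^ r := pow_ge q hq1 hq2 _
  have hd : (1:ℝ)/4 ≤ (1 + q ^ (r + 1 + 1)) * (1 + q ^ r) := by nlinarith
  have hnum : |q ^ r * (1 + q) ^ 2| ≤ |q| ^ r := by
    rw [abs_mul, abs_pow]
    have h3 : |(1 + q) ^ 2| ≤ 1 := by
      rw [abs_of_nonneg (sq_nonneg _)]; nlinarith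
    calc |q| ^ r * |(1 + q) ^ 2| ≤ |q| ^ r * 1 :=
          mul_le_mul_of_nonneg_left h3 (by positivity)
      _ = |q| ^ r := mul_one _
  unfold circCoeff
  simp only [Nat.add_sub_cancel]
  rw [abs_div]
  have hdabs : (1:ℝ)/4 ≤ |(1 + q ^ (r + 1 + 1)) * (1 + q ^ r)| := by
    rw [abs_of_pos (by linarith)]; exact hd
  calc |q ^ r * (1 + q) ^ 2| / |(1 + q ^ (r + 1 + 1)) * (1 + q ^ r)|
      ≤ |q| ^ r / (1/4) := div_le_div₀ (by positivity) hnum (by norm_num) hdabs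
    _ = 4 * |q| ^ r := by ring

lemma summable_f (q t : ℝ) (hq1 : -1/2 ≤ q) (hq2 : q < 0) :
    Summable (fun r : ℕ => (-1 : ℝ) ^ (r + 1) * circCoeff q (r + 1) * Real.cos (2 * (r + 1) * t)) := by
  have hq : |q| < 1 := by rw [abs_of_neg hq2]; linarith
  apply Summable.of_norm_bounded (g := fun r => 4 * |q| ^ r)
    ((summable_geometric_of_lt_one (abs_nonneg q) hq).mul_left 4)
  intro r
  rw [Real.norm_eq_abs, abs_mul, abs_mul, abs_pow, abs_neg, abs_one, one_pow, one_mul]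
  calc |circCoeff q (r + 1)| * |Real.cos (2 * (r + 1) * t)| ≤ (4 * |q| ^ r) * 1 :=
        mul_le_mul (coeff_bound q hq1 hq2 r) (Real.abs_cos_le_one _) (abs_nonneg _) (by positivity)
    _ = 4 * |q| ^ r := mul_one _

lemma est (q t : ℝ) (hq1 : -1/2 ≤ q) (hq2 : q < 0) :
    |circDensity q t - 2 * Real.sin t ^ 2| ≤ 18 * |q| := by
  set f : ℕ → ℝ := fun r => (-1 : ℝ) ^ (r + 1) * circCoeff q (r + 1) * Real.cos (2 * (r + 1) * t)
    with hf
  have hs : Summable f := summable_f q t hq1 hq2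
  have hsplit : ∑' r, f r = f 0 + ∑' r, f (r + 1) := Summable.tsum_eq_zero_add hs
  have hq : |q| ≤ 1/2 := by rw [abs_of_neg hq2]; linarith
  -- bound on the tail
  have htail : |∑' r, f (r + 1)| ≤ 8 * |q| := by
    have hgs : HasSum (fun r : ℕ => (4 * |q|) * |q| ^ r) ((4 * |q|) * (1 - |q|)⁻¹) :=
      (hasSum_geometric_of_lt_one (abs_nonneg q) (by linarith)).mul_left _
    have hb : ∀ r : ℕ, ‖f (r + 1)‖ ≤ (4 * |q|) * |q| ^ r := by
      intro r
      rw [Real.norm_eq_abs, hf]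
      simp only
      rw [abs_mul, abs_mul, abs_pow, abs_neg, abs_one, one_pow, one_mul]
      have h1 : |circCoeff q (r + 1 + 1)| ≤ 4 * |q| ^ (r + 1) := coeff_bound q hq1 hq2 (r + 1)
      calc |circCoeff q (r + 1 + 1)| * |Real.cos (2 * (↑(r+1) + 1) * t)| ≤ (4 * |q| ^ (r+1)) * 1 :=
            mul_le_mul h1 (Real.abs_cos_le_one _) (abs_nonneg _) (by positivity)
        _ = (4 * |q|) * |q| ^ r := by ring
    have := tsum_of_norm_bounded hgs hb
    rw [Real.norm_eq_abs] at this
    have hinv : (1 - |q|)⁻¹ ≤ 2 := by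
      rw [inv_le_comm₀ (by linarith) (by norm_num)]; linarith
    calc |∑' r, f (r + 1)| ≤ (4 * |q|) * (1 - |q|)⁻¹ := this
      _ ≤ (4 * |q|) * 2 := by
          apply mul_le_mul_of_nonneg_left hinv (by positivity)
      _ = 8 * |q| := by ring
  -- compute f 0
  have hc1 : circCoeff q 1 = (1 + q)^2 / ((1 + q^2) * 2) := by
    unfold circCoeff; norm_num
  have hf0 : f 0 = -(circCoeff q 1) * Real.cos (2 * t) := by
    simp [hf]
  have hsin : 2 * Real.sin t ^ 2 = 1 - Real.cos (2 * t) := by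
    have h := Real.cos_sq t
    have h2 := Real.sin_sq_add_cos_sq t
    linarith
  have hden : (0:ℝ) < 1 + q^2 := by positivity
  have hc1' : 1 - 2 * circCoeff q 1 = -2*q / (1 + q^2) := by
    rw [hc1]; field_simp; ring
  have key : circDensity q t - 2 * Real.sin t ^ 2
      = (1 - 2 * circCoeff q 1) * Real.cos (2 * t) + 2 * ∑' r, f (r + 1) := by
    rw [circDensity, ← hf, hsplit, hf0, hsin]; ring
  have hA : |(1 - 2 * circCoeff q 1) * Real.cos (2 * t)| ≤ 2 * |q| := by
    rw [abs_mul, hc1', abs_div]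
    have h1 : |(-2*q)| = 2 * |q| := by rw [abs_mul]; norm_num
    have h2 : (1:ℝ) ≤ |1 + q^2| := by rw [abs_of_pos hden]; nlinarith
    calc |(-2*q)| / |1 + q^2| * |Real.cos (2*t)| ≤ (2*|q|) / 1 * 1 := by
          apply mul_le_mul _ (Real.abs_cos_le_one _) (abs_nonneg _) (by positivity)
          rw [h1]; exact div_le_div₀ (by positivity) le_rfl (by norm_num) h2
      _ = 2 * |q| := by ring
  calc |circDensity q t - 2 * Real.sin t ^ 2|
      ≤ |(1 - 2 * circCoeff q 1) * Real.cos (2 * t)| + |2 * ∑' r, f (r + 1)| := by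
        rw [key]; exact abs_add_le _ _
    _ ≤ 2 * |q| + 2 * (8 * |q|) := by
        refine add_le_add hA ?_
        rw [abs_mul]; norm_num
        linarith [htail]
    _ ≤ 18 * |q| := by ring_nf; linarith

/-- As `q → 0⁻`, the densities `F_q` converge uniformly on `ℝ` to `t ↦ 2 sin² t`,
 the circular density of the standard semicircle distribution. -/
theorem stmt7 :
    TendstoUniformly (fun (q : ℝ) (t : ℝ) => circDensity q t)
      (fun t => 2 * Real.sin t ^ 2) (nhdsWithin (0 : ℝ) (Set.Iio 0)) := by
  rw [Metric.tendstoUniformly_iff]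
  intro ε hε
  have hδ : (0:ℝ) < min (1/2) (ε / 19) := by positivity
  have hmem : Set.Ioo (-(min (1/2) (ε/19))) 0 ∈ nhdsWithin (0:ℝ) (Set.Iio 0) :=
    Ioo_mem_nhdsLT_of_mem ⟨by linarith, le_rfl⟩
  filter_upwards [hmem] with q hq t
  obtain ⟨hq1, hq2⟩ := hq
  have h12 : -1/2 ≤ q := by
    have : min (1/2) (ε/19) ≤ 1/2 := min_le_left _ _
    linarith
  have habs : |q| < min (1/2) (ε/19) := by
    rw [abs_of_neg hq2]; linarith
  have := est q t h12 hq2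
  rw [Real.dist_eq, abs_sub_comm]
  have hε19 : min (1/2) (ε/19) ≤ ε/19 := min_le_right _ _
  calc |circDensity q t - 2 * Real.sin t ^ 2| ≤ 18 * |q| := this
    _ < 18 * (ε/19) := by nlinarith [abs_nonneg q]
    _ < ε := by linarith
end

section
/- For all integers k ≥ 1 and n ≥ 2, the symmetric real matrix ( n^{l(p,p′)} )_{p,p′ ∈ NC₂(2k)} is positive definite; in particular it is invertible. -/
/-- Noncrossing pair partitions of `{1,…,m}`, encoded as fixed-point-free involutions of
`Fin m` with no crossing `a < b < c < d`, `p a = c`, `p b = d`. -/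
def NC2 (m : ℕ) : Set (Equiv.Perm (Fin m)) :=
  {p | (∀ i, p i ≠ i) ∧ p * p = 1 ∧
    ∀ a b c d : Fin m, a < b → b < c → c < d → p a = c → p b ≠ d}

noncomputable instance (m : ℕ) : Fintype (NC2 m) := Fintype.ofFinite _

/-- `loops p p'`: the number of orbits on `{1,…,m}` of the subgroup generated by `p` and `p'`,
i.e. the number of loops obtained by gluing the diagrams `p` and `p'`. -/
noncomputable def loops {m : ℕ} (p p' : Equiv.Perm (Fin m)) : ℕ :=
  Nat.card (MulAction.orbitRel.Quotient (Subgroup.closure {p, p'}) (Fin m))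

/-- The Gram matrix `G_{kn}(p,p') = n^{l(p,p')}` indexed by noncrossing pair partitions. -/
noncomputable def gramNC (k n : ℕ) : Matrix (NC2 (2 * k)) (NC2 (2 * k)) ℝ :=
  fun p p' => (n : ℝ) ^ loops (p : Equiv.Perm (Fin (2 * k))) (p' : Equiv.Perm (Fin (2 * k)))

namespace NCaux

variable {m : ℕ}

lemma invol {p : Equiv.Perm (Fin m)} (hp : p ∈ NC2 m) (x : Fin m) : p (p x) = x := by
  have h := hp.2.1
  have := congrArg (fun q : Equiv.Perm (Fin m) => q x) h
  simpa [Equiv.Perm.mul_apply] using this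

lemma ne_self {p : Equiv.Perm (Fin m)} (hp : p ∈ NC2 m) (x : Fin m) : p x ≠ x := hp.1 x

/-- the open interval strictly between the endpoints of an arc is invariant -/
lemma L1 {p : Equiv.Perm (Fin m)} (hp : p ∈ NC2 m) {a x : Fin m}
    (hab : a < p a) (h1 : a < x) (h2 : x < p a) : a < p x ∧ p x < p a := by
  set b := p a with hb
  have hpb : p b = a := invol hp a
  have hxne : p x ≠ x := hp.1 x
  have hxa : p x ≠ a := by
    intro h; have : p a = x := by rw [← h, invol hp]
    exact absurd this.symm (ne_of_lt h2)
  have hxb : p x ≠ b := by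
    intro h; have : x = a := by rw [← hpb, ← h, invol hp]
    exact absurd this (ne_of_gt h1)
  rcases lt_trichotomy (p x) a with hlt | heq | hgt
  · -- p x < a < x < b : crossing (p x, a, x, b) with p (p x) = x, p a = b
    exact absurd rfl (hp.2.2 (p x) a x b hlt h1 h2 (invol hp x))
  · exact absurd heq hxa
  · refine ⟨hgt, ?_⟩
    rcases lt_trichotomy (p x) b with hlt' | heq' | hgt'
    · exact hlt'
    · exact absurd heq' hxb
    · -- a < x < b < p x : crossing (a, x, b, p x)
      exact absurd rfl (hp.2.2 a x b (p x) h1 h2 hgt' hb.symm)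

/-- arcs join points of opposite parity -/
lemma parity {p : Equiv.Perm (Fin m)} (hp : p ∈ NC2 m) (a : Fin m) :
    (p a).val % 2 ≠ a.val % 2 := by
  -- reduce to the case a < p a
  suffices H : ∀ c : Fin m, c < p c → (p c).val % 2 ≠ c.val % 2 by
    rcases lt_trichotomy a (p a) with h | h | h
    · exact H a h
    · exact absurd h.symm (hp.1 a)
    · have := H (p a) (by rw [invol hp]; exact h)
      rw [invol hp] at this
      exact fun hc => this hc.symm
  intro c hc
  -- the interval Ioo c (p c) is invariant under p, p is a fixed-point-free involution on it,
  -- hence it has even cardinality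
  set S : Finset (Fin m) := Finset.Ioo c (p c) with hS
  have hmem : ∀ x ∈ S, p x ∈ S := by
    intro x hx
    rw [hS, Finset.mem_Ioo] at hx ⊢
    exact L1 hp hc hx.1 hx.2
  -- S.card even : pair up openers and closers inside S
  have hcard : S.card = 2 * (S.filter (fun x => x < p x)).card := by
    classical
    have hneg : S.filter (fun x => ¬ x < p x) = S.filter (fun x => p x < x) := by
      apply Finset.filter_congr
      intro x _
      simp only [not_lt, eq_iff_iff]
      constructor
      · intro h; exact lt_of_le_of_ne h (hp.1 x)
      · exact le_of_lt
    have hsum := Finset.card_filter_add_card_filter_not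
      (s := S) (p := fun x => x < p x)
    have himg : (S.filter (fun x => x < p x)).image p = S.filter (fun x => p x < x) := by
      ext y
      simp only [Finset.mem_image, Finset.mem_filter]
      constructor
      · rintro ⟨x, ⟨hxS, hxlt⟩, rfl⟩
        exact ⟨hmem x hxS, by rw [invol hp]; exact hxlt⟩
      · rintro ⟨hyS, hylt⟩
        exact ⟨p y, ⟨hmem y hyS, by rw [invol hp]; exact hylt⟩, invol hp y⟩
    have hinj : Set.InjOn p (S.filter (fun x => x < p x)) := fun x _ y _ h => p.injective h
    have hcardimg : ((S.filter (fun x => x < p x)).image p).card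
        = (S.filter (fun x => x < p x)).card := Finset.card_image_of_injOn hinj
    rw [hneg] at hsum
    rw [himg] at hcardimg
    omega
  have hioo : S.card = (p c).val - c.val - 1 := by
    rw [hS, Fin.lt_def] at *
    simpa using Fin.card_Ioo c (p c)
  have hlt : c.val < (p c).val := hc
  omega

end NCaux

namespace NCaux2

open Finset

variable {m : ℕ}

/-- a set invariant under a fixed-point-free involution has even cardinality -/
lemma half {p : Equiv.Perm (Fin m)} (hp0 : ∀ x, p x ≠ x) (hp1 : ∀ x, p (p x) = x)
    (S : Finset (Fin m)) (hmem : ∀ x ∈ S, p x ∈ S) :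
    S.card = 2 * (S.filter (fun x => x < p x)).card := by
  classical
  have hneg : S.filter (fun x => ¬ x < p x) = S.filter (fun x => p x < x) := by
    apply Finset.filter_congr
    intro x _
    simp only [not_lt, eq_iff_iff]
    exact ⟨fun h => lt_of_le_of_ne h (hp0 x), le_of_lt⟩
  have hsum := Finset.card_filter_add_card_filter_not
    (s := S) (p := fun x => x < p x)
  have himg : (S.filter (fun x => x < p x)).image p = S.filter (fun x => p x < x) := by
    ext y
    simp only [Finset.mem_image, Finset.mem_filter]
    constructor
    · rintro ⟨x, ⟨hxS, hxlt⟩, rfl⟩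
      exact ⟨hmem x hxS, by rw [hp1]; exact hxlt⟩
    · rintro ⟨hyS, hylt⟩
      exact ⟨p y, ⟨hmem y hyS, by rw [hp1]; exact hylt⟩, hp1 y⟩
  have hinj : Set.InjOn p (S.filter (fun x => x < p x)) := fun x _ y _ h => p.injective h
  have hcardimg : ((S.filter (fun x => x < p x)).image p).card
      = (S.filter (fun x => x < p x)).card := Finset.card_image_of_injOn hinj
  rw [hneg] at hsum
  rw [himg] at hcardimg
  omega

/-- the set of arcs of `p` spanning the gap just before position `j` -/
def Bset (p : Equiv.Perm (Fin m)) (j : ℕ) : Finset (Fin m) :=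
  Finset.univ.filter (fun x => x.val < j ∧ j ≤ (p x).val)

def area (p : Equiv.Perm (Fin m)) : ℕ := ∑ j ∈ Finset.range (m + 1), (Bset p j).card

def sgn (p : Equiv.Perm (Fin m)) (x : Fin m) : ℤ := if x < p x then 1 else -1

lemma sgn_le_one (p : Equiv.Perm (Fin m)) (x : Fin m) : sgn p x ≤ 1 := by
  unfold sgn; split <;> omega

lemma sgn_eq_one_iff {p : Equiv.Perm (Fin m)} {x : Fin m} : sgn p x = 1 ↔ x < p x := by
  unfold sgn; split <;> simp_all

/-- splitting the sum of signs over an initial segment along the arcs of `q` -/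
lemma sumA {p q : Equiv.Perm (Fin m)} (hp0 : ∀ x, p x ≠ x)
    (hq0 : ∀ x, q x ≠ x) (hq1 : ∀ x, q (q x) = x)
    (hbc : ∀ x, x < p x ↔ p (q x) < q x) (j : ℕ) :
    ∑ x ∈ Finset.univ.filter (fun x : Fin m => x.val < j), sgn p x
      = ∑ x ∈ Bset q j, sgn p x := by
  classical
  set T := Finset.univ.filter (fun x : Fin m => x.val < j) with hT
  have hsplit := Finset.sum_filter_add_sum_filter_not T (fun x => (q x).val < j) (sgn p)
  have hB : T.filter (fun x => ¬ (q x).val < j) = Bset q j := by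
    rw [hT, Finset.filter_filter]
    unfold Bset
    apply Finset.filter_congr
    intro x _
    simp [not_lt]
  have hzero : ∑ x ∈ T.filter (fun x => (q x).val < j), sgn p x = 0 := by
    apply Finset.sum_involution (g := fun a _ => q a)
    · intro a _
      -- sgn p a + sgn p (q a) = 0
      rcases lt_or_ge a (p a) with h | h
      · have h2 : p (q a) < q a := (hbc a).mp h
        have : ¬ (q a < p (q a)) := asymm h2
        simp [sgn, h, this]
      · have h1 : ¬ a < p a := not_lt.mpr h
        have h2 : ¬ p (q a) < q a := fun hc => h1 ((hbc a).mpr hc)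
        have h3 : q a < p (q a) := lt_of_le_of_ne (not_lt.mp h2) (Ne.symm (hp0 (q a)))
        simp [sgn, h1, h3]
    · intro a _ _
      exact fun h => hq0 a h
    · intro a ha
      simp only [Finset.mem_filter, hT, Finset.mem_univ, true_and] at ha ⊢
      exact ⟨ha.2, by rw [hq1]; exact ha.1⟩
    · intro a _
      exact hq1 a
  rw [← hsplit, hzero, zero_add, hB]

end NCaux2

namespace NCaux2

open Finset

variable {m : ℕ}

lemma self_bichromatic {p : Equiv.Perm (Fin m)} (hp0 : ∀ x, p x ≠ x) (hp1 : ∀ x, p (p x) = x) :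
    ∀ x, x < p x ↔ p (p x) < p x := by
  intro x; rw [hp1]

lemma sum_self {p : Equiv.Perm (Fin m)} (j : ℕ) :
    ∑ x ∈ Bset p j, sgn p x = (Bset p j).card := by
  have h : ∀ x ∈ Bset p j, sgn p x = 1 := by
    intro x hx
    rw [sgn_eq_one_iff]
    simp only [Bset, Finset.mem_filter] at hx
    rw [Fin.lt_def]
    omega
  rw [Finset.sum_congr rfl h]
  simp

lemma key_le {p q : Equiv.Perm (Fin m)} (hp0 : ∀ x, p x ≠ x) (hp1 : ∀ x, p (p x) = x)
    (hq0 : ∀ x, q x ≠ x) (hq1 : ∀ x, q (q x) = x)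
    (hbc : ∀ x, x < p x ↔ p (q x) < q x) (j : ℕ) :
    (Bset p j).card ≤ (Bset q j).card := by
  have h1 : ((Bset p j).card : ℤ) = ∑ x ∈ Bset q j, sgn p x := by
    rw [← sum_self (p := p) j, ← sumA hp0 hp0 hp1 (self_bichromatic hp0 hp1) j,
      sumA hp0 hq0 hq1 hbc j]
  have h2 : ∑ x ∈ Bset q j, sgn p x ≤ ∑ x ∈ Bset q j, (1 : ℤ) :=
    Finset.sum_le_sum (fun x _ => sgn_le_one p x)
  simp only [Finset.sum_const, nsmul_eq_mul, mul_one] at h2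
  exact_mod_cast h1 ▸ h2

lemma key_eq {p q : Equiv.Perm (Fin m)} (hp0 : ∀ x, p x ≠ x) (hp1 : ∀ x, p (p x) = x)
    (hq0 : ∀ x, q x ≠ x) (hq1 : ∀ x, q (q x) = x)
    (hbc : ∀ x, x < p x ↔ p (q x) < q x) (j : ℕ)
    (hcard : (Bset p j).card = (Bset q j).card) :
    ∀ x ∈ Bset q j, x < p x := by
  have h1 : ((Bset p j).card : ℤ) = ∑ x ∈ Bset q j, sgn p x := by
    rw [← sum_self (p := p) j, ← sumA hp0 hp0 hp1 (self_bichromatic hp0 hp1) j,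
      sumA hp0 hq0 hq1 hbc j]
  intro x hx
  by_contra hcon
  have hlt : sgn p x < 1 := by
    unfold sgn; simp [hcon]
  have : ∑ y ∈ Bset q j, sgn p y < ∑ y ∈ Bset q j, (1 : ℤ) :=
    Finset.sum_lt_sum (fun y _ => sgn_le_one p y) ⟨x, hx, hlt⟩
  simp only [Finset.sum_const, nsmul_eq_mul, mul_one] at this
  rw [← h1, hcard] at this
  exact lt_irrefl _ this

lemma area_le {p q : Equiv.Perm (Fin m)} (hp0 : ∀ x, p x ≠ x) (hp1 : ∀ x, p (p x) = x)
    (hq0 : ∀ x, q x ≠ x) (hq1 : ∀ x, q (q x) = x)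
    (hbc : ∀ x, x < p x ↔ p (q x) < q x) :
    area p ≤ area q :=
  Finset.sum_le_sum (fun j _ => key_le hp0 hp1 hq0 hq1 hbc j)

/-- if moreover the areas agree, then openers of `q` are openers of `p` -/
lemma openers_subset {p q : Equiv.Perm (Fin m)} (hp0 : ∀ x, p x ≠ x) (hp1 : ∀ x, p (p x) = x)
    (hq0 : ∀ x, q x ≠ x) (hq1 : ∀ x, q (q x) = x)
    (hbc : ∀ x, x < p x ↔ p (q x) < q x) (harea : area p = area q) :
    ∀ x : Fin m, x < q x → x < p x := by
  have hall : ∀ j ∈ Finset.range (m + 1), (Bset p j).card = (Bset q j).card := by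
    have := (Finset.sum_eq_sum_iff_of_le
      (fun j (_ : j ∈ Finset.range (m + 1)) => key_le hp0 hp1 hq0 hq1 hbc j)).mp harea
    exact fun j hj => (this j hj)
  intro x hx
  have hj : x.val + 1 ∈ Finset.range (m + 1) := by
    simp only [Finset.mem_range]
    omega
  have hxB : x ∈ Bset q (x.val + 1) := by
    simp only [Bset, Finset.mem_filter, Finset.mem_univ, true_and]
    have := (Fin.lt_def).mp hx
    omega
  exact key_eq hp0 hp1 hq0 hq1 hbc (x.val + 1) (hall _ hj) x hxB

/-- subset of openers plus cardinality forces equality of opener predicates -/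
lemma openers_eq {p q : Equiv.Perm (Fin m)} (hp0 : ∀ x, p x ≠ x) (hp1 : ∀ x, p (p x) = x)
    (hq0 : ∀ x, q x ≠ x) (hq1 : ∀ x, q (q x) = x)
    (hsub : ∀ x : Fin m, x < q x → x < p x) :
    ∀ x : Fin m, x < q x ↔ x < p x := by
  classical
  set Oq := Finset.univ.filter (fun x : Fin m => x < q x) with hOq
  set Op := Finset.univ.filter (fun x : Fin m => x < p x) with hOp
  have hss : Oq ⊆ Op := by
    intro x hx
    simp only [hOq, hOp, Finset.mem_filter, Finset.mem_univ, true_and] at hx ⊢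
    exact hsub x hx
  have hcq : (Finset.univ : Finset (Fin m)).card = 2 * Oq.card :=
    half hq0 hq1 _ (fun x _ => Finset.mem_univ _)
  have hcp : (Finset.univ : Finset (Fin m)).card = 2 * Op.card :=
    half hp0 hp1 _ (fun x _ => Finset.mem_univ _)
  have hcards : Op.card ≤ Oq.card := by omega
  have heq : Oq = Op := Finset.eq_of_subset_of_card_le hss hcards
  intro x
  have h1 : x ∈ Oq ↔ x < q x := by simp [hOq]
  have h2 : x ∈ Op ↔ x < p x := by simp [hOp]
  rw [← h1, ← h2, heq]

end NCaux2

namespace NCaux3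

open NCaux NCaux2 Finset

variable {m : ℕ}

lemma nolt {p q : Equiv.Perm (Fin m)} (hp : p ∈ NC2 m) (hq : q ∈ NC2 m)
    (hop : ∀ x : Fin m, x < p x ↔ x < q x) {a : Fin m} (ha : a < p a) (hlt : p a < q a) :
    False := by
  classical
  have haq : a < q a := lt_trans ha hlt
  set OP := Finset.univ.filter (fun y : Fin m => a < y ∧ y ≤ p a ∧ y < p y) with hOP
  set CL := Finset.univ.filter (fun y : Fin m => a < y ∧ y ≤ p a ∧ p y < y) with hCL
  -- (i) OP.card + 1 ≤ CL.card
  have hmemCL : ∀ y ∈ OP, p y ∈ CL := by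
    intro y hy
    simp only [hOP, hCL, Finset.mem_filter, Finset.mem_univ, true_and] at hy ⊢
    obtain ⟨h1, h2, h3⟩ := hy
    have hyb : y < p a := by
      rcases lt_or_eq_of_le h2 with h | h
      · exact h
      · exfalso; rw [h] at h3; rw [invol hp] at h3; exact absurd (lt_trans ha h3) (lt_irrefl a)
    obtain ⟨h4, h5⟩ := L1 hp ha h1 hyb
    exact ⟨h4, le_of_lt h5, by rw [invol hp]; exact h3⟩
  have hinj : Set.InjOn p OP := fun x _ y _ h => p.injective h
  have hbCL : p a ∈ CL := by
    simp only [hCL, Finset.mem_filter, Finset.mem_univ, true_and]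
    exact ⟨ha, le_refl _, by rw [invol hp]; exact ha⟩
  have hbnot : p a ∉ OP.image p := by
    intro h
    simp only [Finset.mem_image] at h
    obtain ⟨y, hy, hpy⟩ := h
    have : y = a := p.injective (by rw [hpy])
    simp only [hOP, Finset.mem_filter] at hy
    rw [this] at hy
    exact absurd hy.2.1 (lt_irrefl a)
  have hsub1 : insert (p a) (OP.image p) ⊆ CL := by
    intro y hy
    rcases Finset.mem_insert.mp hy with h | h
    · rw [h]; exact hbCL
    · obtain ⟨z, hz, rfl⟩ := Finset.mem_image.mp h
      exact hmemCL z hz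
  have hc1 : OP.card + 1 ≤ CL.card := by
    have := Finset.card_le_card hsub1
    rw [Finset.card_insert_of_notMem hbnot, Finset.card_image_of_injOn hinj] at this
    omega
  -- (ii) CL.card ≤ OP.card
  have hmemOP : ∀ y ∈ CL, q y ∈ OP := by
    intro y hy
    simp only [hOP, hCL, Finset.mem_filter, Finset.mem_univ, true_and] at hy ⊢
    obtain ⟨h1, h2, h3⟩ := hy
    have hqy : q y < y := by
      have hnlt : ¬ y < q y := fun h => absurd ((hop y).mpr h) (not_lt.mpr (le_of_lt h3))
      exact lt_of_le_of_ne (not_lt.mp hnlt) (hq.1 y)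
    have hyb' : y < q a := lt_of_le_of_lt h2 hlt
    obtain ⟨h4, _⟩ := L1 hq haq h1 hyb'
    refine ⟨h4, le_trans (le_of_lt hqy) h2, ?_⟩
    rw [hop]
    have : q (q y) = y := invol hq y
    rw [this]
    exact hqy
  have hinj2 : Set.InjOn q CL := fun x _ y _ h => q.injective h
  have hc2 : CL.card ≤ OP.card := by
    have hsub2 : CL.image q ⊆ OP := by
      intro y hy
      obtain ⟨z, hz, rfl⟩ := Finset.mem_image.mp hy
      exact hmemOP z hz
    have := Finset.card_le_card hsub2
    rwa [Finset.card_image_of_injOn hinj2] at this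
  omega

lemma uniq {p q : Equiv.Perm (Fin m)} (hp : p ∈ NC2 m) (hq : q ∈ NC2 m)
    (hop : ∀ x : Fin m, x < p x ↔ x < q x) : p = q := by
  have hopen : ∀ a : Fin m, a < p a → p a = q a := by
    intro a ha
    by_contra hne
    rcases lt_or_gt_of_ne hne with h | h
    · exact nolt hp hq hop ha h
    · exact nolt hq hp (fun x => (hop x).symm) ((hop a).mp ha) h
  apply Equiv.ext
  intro x
  rcases lt_trichotomy x (p x) with h | h | h
  · exact hopen x h
  · exact absurd h.symm (hp.1 x)
  · have hx : p x < p (p x) := by rw [invol hp]; exact h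
    have := hopen (p x) hx
    rw [invol hp] at this
    -- this : x = q (p x)
    calc p x = q (q (p x)) := (invol hq (p x)).symm
    _ = q x := by rw [← this]
end NCaux3

noncomputable def loops' {m : ℕ} (p p' : Equiv.Perm (Fin m)) : ℕ :=
  Nat.card (MulAction.orbitRel.Quotient (Subgroup.closure {p, p'}) (Fin m))

namespace NCaux4

open Finset

variable {m n : ℕ}

open scoped Classical in
noncomputable def vfun (n : ℕ) {m : ℕ} (q : Equiv.Perm (Fin m)) (i : Fin m → Fin n) : ℝ :=
  if ∀ a, i (q a) = i a then 1 else 0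

lemma inv_closure {p q : Equiv.Perm (Fin m)} {i : Fin m → Fin n}
    (hip : ∀ a, i (p a) = i a) (hiq : ∀ a, i (q a) = i a) :
    ∀ g ∈ Subgroup.closure ({p, q} : Set (Equiv.Perm (Fin m))), ∀ x, i (g x) = i x := by
  intro g hg
  induction hg using Subgroup.closure_induction with
  | mem x hx =>
    rcases hx with h | h
    · rw [h]; exact hip
    · rw [Set.mem_singleton_iff] at h; rw [h]; exact hiq
  | one => intro x; simp
  | mul g h hg hh ihg ihh =>
    intro x
    rw [Equiv.Perm.mul_apply, ihg, ihh]
  | inv g hg ih =>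
    intro x
    have := ih (g⁻¹ x)
    rw [← Equiv.Perm.mul_apply, mul_inv_cancel, Equiv.Perm.one_apply] at this
    exact this.symm

noncomputable def orbitEquiv (p q : Equiv.Perm (Fin m)) (n : ℕ) :
    {i : Fin m → Fin n // (∀ a, i (p a) = i a) ∧ (∀ a, i (q a) = i a)} ≃
      (MulAction.orbitRel.Quotient (Subgroup.closure ({p, q} : Set (Equiv.Perm (Fin m))))
        (Fin m) → Fin n) where
  toFun := fun ⟨i, hi⟩ => Quotient.lift i (by
    rintro x y hxy
    obtain ⟨⟨g, hg⟩, rfl⟩ := hxy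
    exact inv_closure hi.1 hi.2 g hg y)
  invFun := fun φ => ⟨fun x => φ (Quotient.mk'' x), by
    constructor
    · intro a
      apply congrArg φ
      apply Quotient.sound
      exact ⟨⟨p, Subgroup.subset_closure (by simp)⟩, rfl⟩
    · intro a
      apply congrArg φ
      apply Quotient.sound
      exact ⟨⟨q, Subgroup.subset_closure (by simp)⟩, rfl⟩⟩
  left_inv := fun ⟨i, hi⟩ => rfl
  right_inv := fun φ => by
    funext x
    induction x using Quotient.ind
    rfl

lemma card_invariant (p q : Equiv.Perm (Fin m)) :
    Nat.card {i : Fin m → Fin n // (∀ a, i (p a) = i a) ∧ (∀ a, i (q a) = i a)}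
      = n ^ loops' p q := by
  rw [Nat.card_congr (orbitEquiv p q n), Nat.card_fun]
  simp [loops']

lemma gram_entry (p q : Equiv.Perm (Fin m)) :
    ∑ i : Fin m → Fin n, vfun n p i * vfun n q i = (n : ℝ) ^ loops' p q := by
  classical
  have hpt : ∀ i : Fin m → Fin n, vfun n p i * vfun n q i
      = if (∀ a, i (p a) = i a) ∧ (∀ a, i (q a) = i a) then (1 : ℝ) else 0 := by
    intro i
    by_cases h1 : ∀ a, i (p a) = i a <;> by_cases h2 : ∀ a, i (q a) = i a <;>
      simp [vfun, h1, h2]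
  rw [Finset.sum_congr rfl (fun i _ => hpt i)]
  rw [Finset.sum_boole]
  have h1 : (Finset.univ.filter
      (fun i : Fin m → Fin n => (∀ a, i (p a) = i a) ∧ (∀ a, i (q a) = i a))).card
      = Fintype.card {i : Fin m → Fin n // (∀ a, i (p a) = i a) ∧ (∀ a, i (q a) = i a)} :=
    (Fintype.card_subtype _).symm
  have h2 := card_invariant (n := n) p q
  rw [← Nat.card_eq_fintype_card] at h1
  rw [h1, h2]
  push_cast
  ring

end NCaux4

namespace NCaux5

open NCaux NCaux2 NCaux3 NCaux4

variable {m n : ℕ}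

def testpt (hn : 2 ≤ n) (p : Equiv.Perm (Fin m)) : Fin m → Fin n :=
  fun a => if (a.val % 2 = 0) ↔ (a < p a) then ⟨0, by omega⟩ else ⟨1, by omega⟩

lemma test_eq_iff (hn : 2 ≤ n) {p q : Equiv.Perm (Fin m)} (hp0 : ∀ x, p x ≠ x)
    (hq : q ∈ NC2 m) (a : Fin m) :
    testpt hn p (q a) = testpt hn p a ↔ ((a < p a) ↔ (p (q a) < q a)) := by
  have hpar : ((q a).val % 2 = 0) ↔ ¬ (a.val % 2 = 0) := by
    have := parity hq a
    omega
  have hfpf : (p (q a) < q a) ↔ ¬ (q a < p (q a)) := by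
    constructor
    · intro h; exact asymm h
    · intro h; exact lt_of_le_of_ne (not_lt.mp h) (hp0 (q a))
  have h01 : (⟨0, by omega⟩ : Fin n) ≠ ⟨1, by omega⟩ := by
    intro h
    have := Fin.mk.injEq (n := n) 0 (by omega) 1 (by omega) ▸ h
    simp [Fin.mk.injEq] at h
  rw [hfpf]
  unfold testpt
  by_cases hP : a.val % 2 = 0 <;> by_cases hX : a < p a <;> by_cases hY : q a < p (q a) <;>
    simp [hP, hX, hY, hpar, h01]

lemma vfun_testpt_one (hn : 2 ≤ n) {p q : Equiv.Perm (Fin m)} (hp0 : ∀ x, p x ≠ x)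
    (hq : q ∈ NC2 m) (hbc : ∀ x : Fin m, x < p x ↔ p (q x) < q x) :
    vfun n q (testpt hn p) = 1 := by
  have : ∀ a, testpt hn p (q a) = testpt hn p a :=
    fun a => (test_eq_iff hn hp0 hq a).mpr (hbc a)
  simp [vfun, this]

lemma vfun_testpt_zero (hn : 2 ≤ n) {p q : Equiv.Perm (Fin m)} (hp0 : ∀ x, p x ≠ x)
    (hq : q ∈ NC2 m) (hbc : ¬ ∀ x : Fin m, x < p x ↔ p (q x) < q x) :
    vfun n q (testpt hn p) = 0 := by
  have : ¬ ∀ a, testpt hn p (q a) = testpt hn p a := by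
    intro h
    exact hbc (fun a => (test_eq_iff hn hp0 hq a).mp (h a))
  simp [vfun, this]

lemma vfun_self_one (hn : 2 ≤ n) {p : Equiv.Perm (Fin m)} (hp : p ∈ NC2 m) :
    vfun n p (testpt hn p) = 1 := by
  apply vfun_testpt_one hn hp.1 hp
  intro x
  rw [invol hp]

end NCaux5

namespace NCaux6

open NCaux NCaux2 NCaux3 NCaux4 NCaux5

variable {m n : ℕ}

lemma area_bound (p : Equiv.Perm (Fin m)) : area p ≤ (m + 1) * m := by
  unfold area
  calc ∑ j ∈ Finset.range (m + 1), (Bset p j).card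
      ≤ ∑ _j ∈ Finset.range (m + 1), m := by
        apply Finset.sum_le_sum
        intro j _
        calc (Bset p j).card ≤ (Finset.univ : Finset (Fin m)).card :=
              Finset.card_le_card (Finset.filter_subset _ _)
        _ = m := by simp
    _ = (m + 1) * m := by simp [Finset.sum_const, Finset.card_range]

lemma indep (hn : 2 ≤ n) {c : NC2 m → ℝ}
    (hc : ∀ i : Fin m → Fin n, ∑ q : NC2 m, c q * vfun n (q : Equiv.Perm (Fin m)) i = 0) :
    ∀ p : NC2 m, c p = 0 := by
  classical
  have main : ∀ t : ℕ, ∀ p : NC2 m, (m + 1) * m - area (p : Equiv.Perm (Fin m)) = t →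
      c p = 0 := by
    intro t
    induction t using Nat.strong_induction_on with
    | _ t IH =>
      intro p hpt
      have hp := p.2
      have h0 := hc (testpt hn (p : Equiv.Perm (Fin m)))
      have hzero : ∀ q : NC2 m, q ∈ (Finset.univ : Finset (NC2 m)) → q ≠ p →
          c q * vfun n (q : Equiv.Perm (Fin m)) (testpt hn (p : Equiv.Perm (Fin m))) = 0 := by
        intro q _ hqp
        have hq := q.2
        by_cases hbc : ∀ x : Fin m, x < (p : Equiv.Perm (Fin m)) x ↔
            (p : Equiv.Perm (Fin m)) ((q : Equiv.Perm (Fin m)) x) < (q : Equiv.Perm (Fin m)) x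
        · -- bichromatic: strictly larger area, use induction
          have hle : area (p : Equiv.Perm (Fin m)) ≤ area (q : Equiv.Perm (Fin m)) :=
            area_le hp.1 (invol hp) hq.1 (invol hq) hbc
          have hne : area (p : Equiv.Perm (Fin m)) ≠ area (q : Equiv.Perm (Fin m)) := by
            intro heq
            have hsub := openers_subset hp.1 (invol hp) hq.1 (invol hq) hbc heq
            have hopeq := openers_eq hp.1 (invol hp) hq.1 (invol hq) hsub
            have : (p : Equiv.Perm (Fin m)) = (q : Equiv.Perm (Fin m)) :=
              uniq hp hq (fun x => (hopeq x).symm)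
            exact hqp (Subtype.ext this.symm)
          have hlt : area (p : Equiv.Perm (Fin m)) < area (q : Equiv.Perm (Fin m)) :=
            lt_of_le_of_ne hle hne
          have hbq := area_bound (q : Equiv.Perm (Fin m))
          have ht' : (m + 1) * m - area (q : Equiv.Perm (Fin m)) < t := by omega
          have := IH _ ht' q rfl
          rw [this, zero_mul]
        · rw [vfun_testpt_zero hn hp.1 hq hbc, mul_zero]
      rw [Finset.sum_eq_single p hzero (fun h => absurd (Finset.mem_univ p) h)] at h0
      rw [vfun_self_one hn hp, mul_one] at h0
      exact h0
  intro p
  exact main _ p rfl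

end NCaux6

namespace NCaux7

open NCaux NCaux2 NCaux3 NCaux4 NCaux5 NCaux6

lemma loops_comm {m : ℕ} (p q : Equiv.Perm (Fin m)) : loops p q = loops q p := by
  unfold loops
  rw [Set.pair_comm p q]

lemma gram_eq {k n : ℕ} (p q : NC2 (2 * k)) :
    gramNC k n p q = ∑ i : Fin (2 * k) → Fin n,
      vfun n (p : Equiv.Perm (Fin (2 * k))) i * vfun n (q : Equiv.Perm (Fin (2 * k))) i := by
  rw [gram_entry]
  rfl

end NCaux7

open NCaux NCaux2 NCaux3 NCaux4 NCaux5 NCaux6 NCaux7 in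
theorem stmt9 (k n : ℕ) (hk : 1 ≤ k) (hn : 2 ≤ n) :
    (gramNC k n).PosDef ∧ IsUnit (gramNC k n).det := by
  classical
  have hherm : (gramNC k n).IsHermitian := by
    unfold Matrix.IsHermitian
    ext i j
    simp only [Matrix.conjTranspose_apply, star_trivial]
    show (n : ℝ) ^ loops (j : Equiv.Perm (Fin (2*k))) (i : Equiv.Perm (Fin (2*k)))
      = (n : ℝ) ^ loops (i : Equiv.Perm (Fin (2*k))) (j : Equiv.Perm (Fin (2*k)))
    rw [loops_comm]
  have hpos : ∀ x : NC2 (2 * k) → ℝ, x ≠ 0 →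
      0 < dotProduct (star x) ((gramNC k n).mulVec x) := by
    intro x hx
    have hst : star x = x := by funext p; simp
    have hkey : dotProduct (star x) ((gramNC k n).mulVec x)
        = ∑ i : Fin (2 * k) → Fin n,
            (∑ p : NC2 (2 * k), x p * vfun n (p : Equiv.Perm (Fin (2 * k))) i) ^ 2 := by
      rw [hst]
      calc dotProduct x ((gramNC k n).mulVec x)
          = ∑ p : NC2 (2 * k), x p * ∑ q : NC2 (2 * k), gramNC k n p q * x q := by
            simp [dotProduct, Matrix.mulVec]
        _ = ∑ p : NC2 (2 * k), ∑ q : NC2 (2 * k), ∑ i : Fin (2 * k) → Fin n,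
              (x p * vfun n (p : Equiv.Perm (Fin (2 * k))) i)
                * (x q * vfun n (q : Equiv.Perm (Fin (2 * k))) i) := by
            apply Finset.sum_congr rfl
            intro p _
            rw [Finset.mul_sum]
            apply Finset.sum_congr rfl
            intro q _
            rw [gram_eq p q, Finset.sum_mul, Finset.mul_sum]
            apply Finset.sum_congr rfl
            intro i _
            ring
        _ = ∑ i : Fin (2 * k) → Fin n, ∑ p : NC2 (2 * k), ∑ q : NC2 (2 * k),
              (x p * vfun n (p : Equiv.Perm (Fin (2 * k))) i)
                * (x q * vfun n (q : Equiv.Perm (Fin (2 * k))) i) := by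
            rw [Finset.sum_congr rfl (fun p (_ : p ∈ Finset.univ) => Finset.sum_comm)]
            exact Finset.sum_comm
        _ = ∑ i : Fin (2 * k) → Fin n,
              (∑ p : NC2 (2 * k), x p * vfun n (p : Equiv.Perm (Fin (2 * k))) i) ^ 2 := by
            apply Finset.sum_congr rfl
            intro i _
            rw [sq, Finset.sum_mul_sum]
    have hnonneg : ∀ i ∈ (Finset.univ : Finset (Fin (2 * k) → Fin n)),
        (0:ℝ) ≤ (∑ p : NC2 (2 * k), x p * vfun n (p : Equiv.Perm (Fin (2 * k))) i) ^ 2 :=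
      fun i _ => sq_nonneg _
    rw [hkey]
    rcases eq_or_lt_of_le (Finset.sum_nonneg hnonneg) with heq | hlt
    · exfalso
      have hall := (Finset.sum_eq_zero_iff_of_nonneg hnonneg).mp heq.symm
      have hcoef : ∀ i : Fin (2 * k) → Fin n,
          ∑ p : NC2 (2 * k), x p * vfun n (p : Equiv.Perm (Fin (2 * k))) i = 0 := by
        intro i
        have := hall i (Finset.mem_univ i)
        exact pow_eq_zero_iff (by norm_num) |>.mp this
      have := indep hn hcoef
      exact hx (funext this)
    · exact hlt
  have hpd : (gramNC k n).PosDef := Matrix.PosDef.of_dotProduct_mulVec_pos hherm hpos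
  exact ⟨hpd, isUnit_iff_ne_zero.mpr (ne_of_gt hpd.det_pos)⟩
end

section
/- Let A be a unital C*-algebra and let q ∈ [−1,0). Let G ∈ M₂(A) be the matrix with first row (0, −q·1) and second row (1, 0); G is invertible with G⁻¹ having first row (0, 1) and second row (−q⁻¹·1, 0). For u ∈ M₂(A), write ū for the matrix of entrywise adjoints and u* for the conjugate transpose. Then the following are equivalent: (i) u*u = uu* = 1 and u = G ū G⁻¹; (ii) there exist α, γ ∈ A such that u has first row (α, −qγ*) and second row (γ, α*), and the relations αγ = qγα, αγ* = qγ*α, γγ* = γ*γ, α*α + γ*γ = 1, and αα* + q²γγ* = 1 hold. -/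
set_option maxHeartbeats 2000000 in
/-- Characterization of the defining relations of `A_o(F) = C(SU_q(2))`:
a unitary `2×2` matrix `u` over a unital C*-algebra `A` satisfies `u = G ū G⁻¹`
(with `G = [[0, -q·1],[1, 0]]`, whose inverse is `[[0, 1],[-q⁻¹·1, 0]]`)
iff it is of the form `[[α, -qγ*],[γ, α*]]` with `α, γ` satisfying Woronowicz's relations. -/
theorem stmt10 {A : Type*} [NormedRing A] [StarRing A] [CStarRing A]
    [NormedAlgebra ℂ A] [StarModule ℂ A] [CompleteSpace A]
    (q : ℝ) (hq : q ∈ Set.Ico (-1 : ℝ) 0)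
    (u : Matrix (Fin 2) (Fin 2) A)
    (G Ginv : Matrix (Fin 2) (Fin 2) A)
    (hG : G = !![0, algebraMap ℂ A (-(q : ℂ)); 1, 0])
    (hGinv : Ginv = !![0, 1; algebraMap ℂ A (-(q : ℂ)⁻¹), 0]) :
    (G * Ginv = 1 ∧ Ginv * G = 1) ∧
    ((u.conjTranspose * u = 1 ∧ u * u.conjTranspose = 1 ∧ u = G * u.map star * Ginv) ↔
      (∃ α γ : A,
        u = !![α, algebraMap ℂ A (-(q : ℂ)) * star γ; γ, star α] ∧
        α * γ = algebraMap ℂ A (q : ℂ) * (γ * α) ∧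
        α * star γ = algebraMap ℂ A (q : ℂ) * (star γ * α) ∧
        γ * star γ = star γ * γ ∧
        star α * α + star γ * γ = 1 ∧
        α * star α + algebraMap ℂ A ((q : ℂ) ^ 2) * (γ * star γ) = 1)) := by
  have hq0 : (q:ℂ) ≠ 0 := by exact_mod_cast (ne_of_lt hq.2)
  have scalm : ∀ (c : ℂ) (x y : A),
      x * (algebraMap ℂ A c * y) = algebraMap ℂ A c * (x * y) := by
    intro c x y
    rw [← mul_assoc, ← Algebra.commutes, mul_assoc]
  have hstarq : star (algebraMap ℂ A (q:ℂ)) = algebraMap ℂ A (q:ℂ) := by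
    rw [← algebraMap_star_comm]
    simp [Complex.star_def, Complex.conj_ofReal]
  subst hG hGinv
  refine ⟨⟨?_, ?_⟩, ?_⟩
  · ext i j
    fin_cases i <;> fin_cases j <;>
      simp [Matrix.mul_apply, Fin.sum_univ_two, Matrix.one_apply, ← map_mul, hq0]
  · ext i j
    fin_cases i <;> fin_cases j <;>
      simp [Matrix.mul_apply, Fin.sum_univ_two, Matrix.one_apply, ← map_mul, hq0]
  constructor
  · rintro ⟨h1, h2, h3⟩
    have hu01 : u 0 1 = algebraMap ℂ A (-(q : ℂ)) * star (u 1 0) := by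
      conv_lhs => rw [h3]
      simp [Matrix.mul_apply, Fin.sum_univ_two, Matrix.vecMul, Matrix.vecHead, Matrix.vecTail,
        dotProduct]
    have hu11 : u 1 1 = star (u 0 0) := by
      conv_lhs => rw [h3]
      simp [Matrix.mul_apply, Fin.sum_univ_two, Matrix.vecMul, Matrix.vecHead, Matrix.vecTail,
        dotProduct]
    have hmat : u = !![u 0 0, algebraMap ℂ A (-(q : ℂ)) * star (u 1 0); u 1 0, star (u 0 0)] := by
      ext i j
      fin_cases i <;> fin_cases j <;> simp [hu01, hu11]
    refine ⟨u 0 0, u 1 0, hmat, ?_, ?_, ?_, ?_, ?_⟩ <;>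
      rw [hmat] at h1 h2
    · -- α γ = q γ α
      have e10 := congrFun (congrFun h1 1) 0
      simp [Matrix.mul_apply, Fin.sum_univ_two, Matrix.vecMul, Matrix.vecHead, Matrix.vecTail,
        dotProduct, Matrix.one_apply, ← algebraMap_star_comm, Complex.star_def,
        Complex.conj_ofReal, mul_assoc] at e10
      exact (neg_add_eq_zero.mp e10).symm.trans (scalm _ _ _)
    · -- α γ* = q γ* α
      have f01 := congrFun (congrFun h2 0) 1
      simp [Matrix.mul_apply, Fin.sum_univ_two, Matrix.vecMul, Matrix.vecHead, Matrix.vecTail,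
        dotProduct, Matrix.one_apply, ← algebraMap_star_comm, Complex.star_def,
        Complex.conj_ofReal, mul_assoc] at f01
      exact add_neg_eq_zero.mp f01
    · -- γ γ* = γ* γ
      have e00 := congrFun (congrFun h1 0) 0
      have f11 := congrFun (congrFun h2 1) 1
      simp [Matrix.mul_apply, Fin.sum_univ_two, Matrix.vecMul, Matrix.vecHead, Matrix.vecTail,
        dotProduct, Matrix.one_apply, ← algebraMap_star_comm, Complex.star_def,
        Complex.conj_ofReal, mul_assoc] at e00 f11
      have h : (1:A) = star (u 1 0) * u 1 0 + star (u 0 0) * u 0 0 := by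
        rw [← e00, add_comm]
      exact add_right_cancel (f11.trans h)
    · -- α* α + γ* γ = 1
      have e00 := congrFun (congrFun h1 0) 0
      simpa [Matrix.mul_apply, Fin.sum_univ_two, Matrix.vecMul, Matrix.vecHead, Matrix.vecTail,
        dotProduct, Matrix.one_apply, ← algebraMap_star_comm, Complex.star_def,
        Complex.conj_ofReal, mul_assoc] using e00
    · -- α α* + q² γ γ* = 1
      have e11 := congrFun (congrFun h1 1) 1
      simp [Matrix.mul_apply, Fin.sum_univ_two, Matrix.vecMul, Matrix.vecHead, Matrix.vecTail,
        dotProduct, Matrix.one_apply, ← algebraMap_star_comm, Complex.star_def,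
        Complex.conj_ofReal, mul_assoc] at e11
      rw [scalm, scalm, ← mul_assoc, ← map_mul, ← sq, add_comm] at e11
      exact e11
  · rintro ⟨α, γ, hmat, r1, r2, r3, r4, r5⟩
    subst hmat
    have st1 : star γ * star α = algebraMap ℂ A (q:ℂ) * (star α * star γ) := by
      calc star γ * star α = star (α * γ) := (star_mul _ _).symm
        _ = star (algebraMap ℂ A (q:ℂ) * (γ * α)) := by rw [r1]
        _ = star (γ * α) * star (algebraMap ℂ A (q:ℂ)) := star_mul _ _
        _ = (star α * star γ) * algebraMap ℂ A (q:ℂ) := by rw [star_mul, hstarq]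
        _ = algebraMap ℂ A (q:ℂ) * (star α * star γ) := (Algebra.commutes _ _).symm
    have st2 : γ * star α = algebraMap ℂ A (q:ℂ) * (star α * γ) := by
      calc γ * star α = star (α * star γ) := by rw [star_mul, star_star]
        _ = star (algebraMap ℂ A (q:ℂ) * (star γ * α)) := by rw [r2]
        _ = star (star γ * α) * star (algebraMap ℂ A (q:ℂ)) := star_mul _ _
        _ = (star α * γ) * algebraMap ℂ A (q:ℂ) := by rw [star_mul, star_star, hstarq]
        _ = algebraMap ℂ A (q:ℂ) * (star α * γ) := (Algebra.commutes _ _).symm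
    have g2 : -(star α * (algebraMap ℂ A (q:ℂ) * star γ)) + star γ * star α = 0 := by
      rw [scalm, ← st1, neg_add_cancel]
    have g3 : -(γ * (algebraMap ℂ A (q:ℂ) * α)) + α * γ = 0 := by
      rw [scalm, ← r1, neg_add_cancel]
    have g4 : γ * (algebraMap ℂ A (q:ℂ) * (algebraMap ℂ A (q:ℂ) * star γ)) + α * star α = 1 := by
      rw [scalm, scalm, ← mul_assoc, ← map_mul, ← sq, add_comm]
      exact r5
    have g5 : α * star α + algebraMap ℂ A (q:ℂ) * (star γ * (γ * algebraMap ℂ A (q:ℂ))) = 1 := by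
      rw [← Algebra.commutes, scalm, ← mul_assoc, ← map_mul, ← sq, ← r3]
      exact r5
    have g6 : α * star γ + -(algebraMap ℂ A (q:ℂ) * (star γ * α)) = 0 := by
      rw [r2, add_neg_cancel]
    have g7 : γ * star α + -(star α * (γ * algebraMap ℂ A (q:ℂ))) = 0 := by
      rw [← Algebra.commutes, scalm, ← st2, add_neg_cancel]
    have g8 : γ * star γ + star α * α = 1 := by
      rw [r3, add_comm]
      exact r4
    have g9 : α = algebraMap ℂ A (q:ℂ) * (α * algebraMap ℂ A (q:ℂ)⁻¹) := by
      rw [← Algebra.commutes, ← mul_assoc, ← map_mul, mul_inv_cancel₀ hq0, map_one, one_mul]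
    refine ⟨?_, ?_, ?_⟩ <;>
    · ext i j
      fin_cases i <;> fin_cases j <;>
      · simp [Matrix.mul_apply, Fin.sum_univ_two, Matrix.vecMul, Matrix.vecHead, Matrix.vecTail,
          dotProduct, Matrix.one_apply, ← algebraMap_star_comm, Complex.star_def,
          Complex.conj_ofReal, mul_assoc, ← map_mul, hq0] <;>
        first
          | exact r4 | exact g2 | exact g3 | exact g4 | exact g5 | exact g6 | exact g7 | exact g8 | exact g9
end
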